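/- arXiv:2512.19157 — 7 statements merged into one kernel-verified Lean document; each statement's English description precedes it below -/
import Mathlib

section
/- Let p ∈ [1,∞) with conjugate exponent q, and let R ⊆ P_q(ℝ) satisfy Assumptions (OT)(i) and (OT)(ii). Then for all random variables X₁, X₂ ∈ L^p(Ω,ℝ) with X₁ ≤ X₂ ℙ-almost surely, one has ρ_R(X₁) ≤ ρ_R(X₂) (monotonicity of the transport-based risk measure). -/
open MeasureTheory ENNReal

/-- `M_s(m)`: the moment of order `s ∈ [1,∞]` of a measure `m` on `ℝ`
(for `s = ∞`, the essential supremum of `|x|`, i.e. the sup of `|x|` over the support). -/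
noncomputable def Mmom (s : ℝ≥0∞) (m : Measure ℝ) : ℝ≥0∞ :=
  eLpNorm (fun x : ℝ => x) s m

/-- Assumption (OT)(i): `R` is a bounded set of probability measures with finite `q`-moment. -/
def OTone (q : ℝ≥0∞) (R : Set (Measure ℝ)) : Prop :=
  (∀ r ∈ R, IsProbabilityMeasure r) ∧ (⨆ r ∈ R, Mmom q r) < ⊤

/-- Assumption (OT)(ii): every `r ∈ R` is supported in `[0,∞)` and has expectation `1`. -/
def OTtwo (R : Set (Measure ℝ)) : Prop :=
  ∀ r ∈ R, r (Set.Iio (0:ℝ)) = 0 ∧ ∫⁻ y, ENNReal.ofReal y ∂r = 1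

/-- The value `χ_R(m)` of the generalized optimal transport problem: the supremum of
`∫ x·y dπ` over transport plans `π` with first marginal `m` and second marginal in `R`. -/
noncomputable def chi (R : Set (Measure ℝ)) (m : Measure ℝ) : ℝ :=
  sSup {v : ℝ | ∃ π : Measure (ℝ × ℝ), IsProbabilityMeasure π ∧
    π.map Prod.fst = m ∧ π.map Prod.snd ∈ R ∧ v = ∫ z : ℝ × ℝ, z.1 * z.2 ∂π}

open ProbabilityTheory

/-- Pushing forward `P ⊗ₘ (κ ∘ X)` by `(ω, y) ↦ (X ω, y)` gives `(P.map X) ⊗ₘ κ`. -/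
lemma map_compProd_comap {Ω : Type} [MeasurableSpace Ω] (P : Measure Ω) [SFinite P]
    (κ : Kernel ℝ ℝ) [IsSFiniteKernel κ] (X : Ω → ℝ) (hX : Measurable X) :
    ((P.compProd (κ.comap X hX)).map (fun z : Ω × ℝ => (X z.1, z.2)))
      = (P.map X).compProd κ := by
  have hf : Measurable (fun z : Ω × ℝ => (X z.1, z.2)) :=
    (hX.comp measurable_fst).prodMk measurable_snd
  ext s hs
  rw [Measure.map_apply hf hs, Measure.compProd_apply (hf hs), Measure.compProd_apply hs,
    lintegral_map (Kernel.measurable_kernel_prodMk_left hs) hX]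
  refine lintegral_congr fun ω => ?_
  rw [Kernel.comap_apply]
  rfl

/-- Monotonicity of the transport-based risk measure: for `R` satisfying (OT)(i)–(ii),
if `X₁ ≤ X₂` almost surely then `ρ_R(X₁) ≤ ρ_R(X₂)`. -/
theorem monotonicity
    (p q : ℝ≥0∞) (hp1 : 1 ≤ p) (hptop : p ≠ ⊤) (hpq : p⁻¹ + q⁻¹ = 1)
    (R : Set (Measure ℝ)) (hR1 : OTone q R) (hR2 : OTtwo R)
    (Ω : Type) [MeasurableSpace Ω] (P : Measure Ω) [IsProbabilityMeasure P]
    (X₁ X₂ : Ω → ℝ) (hX₁ : MemLp X₁ p P) (hX₂ : MemLp X₂ p P)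
    (hle : ∀ᵐ ω ∂P, X₁ ω ≤ X₂ ω) :
    chi R (P.map X₁) ≤ chi R (P.map X₂) := by
  classical
  -- replace the random variables by measurable representatives
  obtain ⟨Y₁, hY₁m, hY₁e⟩ := hX₁.aestronglyMeasurable.aemeasurable
  obtain ⟨Y₂, hY₂m, hY₂e⟩ := hX₂.aestronglyMeasurable.aemeasurable
  have hmap1 : P.map X₁ = P.map Y₁ := Measure.map_congr hY₁e
  have hmap2 : P.map X₂ = P.map Y₂ := Measure.map_congr hY₂e
  have hY₁ : MemLp Y₁ p P := hX₁.ae_eq hY₁e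
  have hY₂ : MemLp Y₂ p P := hX₂.ae_eq hY₂e
  have hleY : ∀ᵐ ω ∂P, Y₁ ω ≤ Y₂ ω := by
    filter_upwards [hle, hY₁e, hY₂e] with ω h1 h2 h3
    rw [← h2, ← h3]; exact h1
  rw [hmap1, hmap2]
  -- notation for the two sets of values
  set S₁ := {v : ℝ | ∃ π : Measure (ℝ × ℝ), IsProbabilityMeasure π ∧
    π.map Prod.fst = P.map Y₁ ∧ π.map Prod.snd ∈ R ∧ v = ∫ z : ℝ × ℝ, z.1 * z.2 ∂π} with hS₁
  set S₂ := {v : ℝ | ∃ π : Measure (ℝ × ℝ), IsProbabilityMeasure π ∧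
    π.map Prod.fst = P.map Y₂ ∧ π.map Prod.snd ∈ R ∧ v = ∫ z : ℝ × ℝ, z.1 * z.2 ∂π} with hS₂
  have hpqr : (1 : ℝ≥0∞) / 1 = 1 / p + 1 / q := by
    simp only [one_div]
    rw [hpq, inv_one]
  -- the supremum of the q-moments over R
  set L : ℝ≥0∞ := ⨆ r ∈ R, Mmom q r with hL
  have hLlt : L < ⊤ := hR1.2
  -- properties of the second-coordinate function for any admissible plan
  have hsndMem : ∀ (π : Measure (ℝ × ℝ)), IsProbabilityMeasure π → π.map Prod.snd ∈ R →
      MemLp (fun z : ℝ × ℝ => z.2) q π ∧ eLpNorm (fun z : ℝ × ℝ => z.2) q π ≤ L := by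
    intro π hπ hsnd
    haveI := hπ
    have heq : eLpNorm (fun x : ℝ => x) q (π.map Prod.snd)
        = eLpNorm (fun z : ℝ × ℝ => z.2) q π :=
      eLpNorm_map_measure measurable_id.aestronglyMeasurable measurable_snd.aemeasurable
    have hle' : eLpNorm (fun z : ℝ × ℝ => z.2) q π ≤ L := by
      rw [← heq]
      exact le_trans (le_of_eq rfl) (le_biSup (fun r => Mmom q r) hsnd)
    exact ⟨⟨measurable_snd.aestronglyMeasurable, lt_of_le_of_lt hle' hLlt⟩, hle'⟩
  -- properties of the first-coordinate function for any admissible plan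
  have hfstMem : ∀ (Y : Ω → ℝ), Measurable Y → MemLp Y p P →
      ∀ (π : Measure (ℝ × ℝ)), IsProbabilityMeasure π → π.map Prod.fst = P.map Y →
      MemLp (fun z : ℝ × ℝ => z.1) p π ∧
        eLpNorm (fun z : ℝ × ℝ => z.1) p π = eLpNorm Y p P := by
    intro Y hYm hYp π hπ hfst
    haveI := hπ
    have heq : eLpNorm (fun x : ℝ => x) p (π.map Prod.fst)
        = eLpNorm (fun z : ℝ × ℝ => z.1) p π :=
      eLpNorm_map_measure measurable_id.aestronglyMeasurable measurable_fst.aemeasurable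
    have heq2 : eLpNorm (fun x : ℝ => x) p (P.map Y) = eLpNorm Y p P :=
      eLpNorm_map_measure measurable_id.aestronglyMeasurable hYm.aemeasurable
    refine ⟨⟨measurable_fst.aestronglyMeasurable, ?_⟩, by rw [← heq, hfst, heq2]⟩
    rw [← heq, hfst, heq2]
    exact hYp.2
  -- integrability of z.1 * z.2 for any admissible plan
  have hIntPlan : ∀ (Y : Ω → ℝ), Measurable Y → MemLp Y p P →
      ∀ (π : Measure (ℝ × ℝ)), IsProbabilityMeasure π → π.map Prod.fst = P.map Y →
      π.map Prod.snd ∈ R → Integrable (fun z : ℝ × ℝ => z.1 * z.2) π := by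
    intro Y hYm hYp π hπ hfst hsnd
    haveI := hπ
    have h1 := (hfstMem Y hYm hYp π hπ hfst).1
    have h2 := (hsndMem π hπ hsnd).1
    have := h2.smul (φ := fun z : ℝ × ℝ => z.1) h1 (hpqr := (⟨by rw [hpq, inv_one]⟩ : ENNReal.HolderTriple p q 1))
    rw [memLp_one_iff_integrable] at this
    exact this
  -- the set S₂ is bounded above
  set C : ℝ := (eLpNorm Y₂ p P * L).toReal with hC
  have hbdd : BddAbove S₂ := by
    refine ⟨C, fun v hv => ?_⟩
    obtain ⟨π, hπ, hfst, hsnd, rfl⟩ := hv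
    haveI := hπ
    have hmul : Integrable (fun z : ℝ × ℝ => z.1 * z.2) π :=
      hIntPlan Y₂ hY₂m hY₂ π hπ hfst hsnd
    have hasm : AEStronglyMeasurable (fun z : ℝ × ℝ => z.1 * z.2) π :=
      (measurable_fst.mul measurable_snd).aestronglyMeasurable
    have holder : eLpNorm (fun z : ℝ × ℝ => z.1 * z.2) 1 π
        ≤ eLpNorm Y₂ p P * L := by
      have h := eLpNorm_smul_le_mul_eLpNorm (f := fun z : ℝ × ℝ => z.2)
        (φ := fun z : ℝ × ℝ => z.1) (μ := π)
        measurable_snd.aestronglyMeasurable measurable_fst.aestronglyMeasurable (hpqr := (⟨by rw [hpq, inv_one]⟩ : ENNReal.HolderTriple p q 1))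
      have hsm : (fun z : ℝ × ℝ => z.1) • (fun z : ℝ × ℝ => z.2)
          = fun z : ℝ × ℝ => z.1 * z.2 := rfl
      rw [hsm] at h
      refine h.trans ?_
      exact mul_le_mul' (le_of_eq (hfstMem Y₂ hY₂m hY₂ π hπ hfst).2)
        (hsndMem π hπ hsnd).2
    calc ∫ z : ℝ × ℝ, z.1 * z.2 ∂π ≤ ‖∫ z : ℝ × ℝ, z.1 * z.2 ∂π‖ := le_abs_self _
      _ ≤ ∫ z : ℝ × ℝ, ‖z.1 * z.2‖ ∂π := norm_integral_le_integral_norm _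
      _ = (eLpNorm (fun z : ℝ × ℝ => z.1 * z.2) 1 π).toReal := by
          rw [integral_norm_eq_lintegral_enorm hasm, eLpNorm_one_eq_lintegral_enorm]
      _ ≤ C := by
          rw [hC]
          exact ENNReal.toReal_mono (ENNReal.mul_ne_top hY₂.2.ne hLlt.ne) holder
  -- trivial case: R empty
  rcases R.eq_empty_or_nonempty with hRe | ⟨r₀, hr₀⟩
  · have h1 : S₁ = ∅ := by
      ext v; simp only [hS₁, Set.mem_setOf_eq, Set.mem_empty_iff_false, iff_false]
      rintro ⟨π, _, _, hsnd, _⟩; rw [hRe] at hsnd; exact hsnd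
    have h2 : S₂ = ∅ := by
      ext v; simp only [hS₂, Set.mem_setOf_eq, Set.mem_empty_iff_false, iff_false]
      rintro ⟨π, _, _, hsnd, _⟩; rw [hRe] at hsnd; exact hsnd
    show sSup S₁ ≤ sSup S₂
    rw [h1, h2]
  -- main case
  have hne : S₁.Nonempty := by
    haveI : IsProbabilityMeasure (P.map Y₁) := Measure.isProbabilityMeasure_map hY₁m.aemeasurable
    haveI : IsProbabilityMeasure r₀ := hR1.1 r₀ hr₀
    refine ⟨∫ z : ℝ × ℝ, z.1 * z.2 ∂((P.map Y₁).prod r₀), (P.map Y₁).prod r₀, inferInstance,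
      ?_, ?_, rfl⟩
    · exact Measure.fst_prod
    · have : ((P.map Y₁).prod r₀).map Prod.snd = r₀ := Measure.snd_prod
      rw [this]; exact hr₀
  show sSup S₁ ≤ sSup S₂
  refine csSup_le hne fun v hv => ?_
  obtain ⟨π₁, hπ₁, hfst₁, hsnd₁, rfl⟩ := hv
  haveI := hπ₁
  -- build the improved plan via disintegration of π₁
  set κ : Kernel ℝ ℝ := π₁.condKernel with hκ
  set μ : Measure (Ω × ℝ) := P.compProd (κ.comap Y₁ hY₁m) with hμ
  haveI : IsProbabilityMeasure μ := by
    rw [hμ]; infer_instance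
  have hf₁m : Measurable (fun z : Ω × ℝ => (Y₁ z.1, z.2)) :=
    (hY₁m.comp measurable_fst).prodMk measurable_snd
  have hf₂m : Measurable (fun z : Ω × ℝ => (Y₂ z.1, z.2)) :=
    (hY₂m.comp measurable_fst).prodMk measurable_snd
  have hμ1 : μ.map (fun z : Ω × ℝ => (Y₁ z.1, z.2)) = π₁ := by
    rw [hμ, map_compProd_comap]
    have : P.map Y₁ = π₁.fst := hfst₁.symm
    rw [this]
    exact π₁.disintegrate π₁.condKernel
  have hμfst : μ.map Prod.fst = P := Measure.fst_compProd P _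
  set π₂ : Measure (ℝ × ℝ) := μ.map (fun z : Ω × ℝ => (Y₂ z.1, z.2)) with hπ₂def
  haveI hπ₂prob : IsProbabilityMeasure π₂ := Measure.isProbabilityMeasure_map hf₂m.aemeasurable
  have hπ₂fst : π₂.map Prod.fst = P.map Y₂ := by
    rw [hπ₂def, Measure.map_map measurable_fst hf₂m]
    have : (Prod.fst ∘ fun z : Ω × ℝ => (Y₂ z.1, z.2)) = Y₂ ∘ Prod.fst := rfl
    rw [this, ← Measure.map_map hY₂m measurable_fst, hμfst]
  have hμsnd : μ.map Prod.snd = π₁.map Prod.snd := by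
    conv_rhs => rw [← hμ1]
    rw [Measure.map_map measurable_snd hf₁m]
    rfl
  have hπ₂snd : π₂.map Prod.snd = π₁.map Prod.snd := by
    rw [hπ₂def, Measure.map_map measurable_snd hf₂m]
    have : (Prod.snd ∘ fun z : Ω × ℝ => (Y₂ z.1, z.2)) = Prod.snd := rfl
    rw [this, hμsnd]
  have hπ₂sndR : π₂.map Prod.snd ∈ R := by rw [hπ₂snd]; exact hsnd₁
  -- integrability
  have hint₁ : Integrable (fun z : Ω × ℝ => Y₁ z.1 * z.2) μ := by
    have h := hIntPlan Y₁ hY₁m hY₁ π₁ hπ₁ hfst₁ hsnd₁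
    rw [← hμ1] at h
    have := h.comp_measurable hf₁m
    exact this
  have hint₂ : Integrable (fun z : Ω × ℝ => Y₂ z.1 * z.2) μ := by
    have h := hIntPlan Y₂ hY₂m hY₂ π₂ hπ₂prob hπ₂fst hπ₂sndR
    rw [hπ₂def] at h
    have := h.comp_measurable hf₂m
    exact this
  -- a.e. inequalities
  have hpos : ∀ᵐ z ∂μ, 0 ≤ z.2 := by
    have h0 : (μ.map Prod.snd) (Set.Iio (0:ℝ)) = 0 := by
      rw [hμsnd]; exact (hR2 _ hsnd₁).1
    rw [Measure.map_apply measurable_snd measurableSet_Iio] at h0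
    rw [ae_iff]
    have : {z : Ω × ℝ | ¬ 0 ≤ z.2} = Prod.snd ⁻¹' Set.Iio (0:ℝ) := by
      ext z; simp [not_le]
    rw [this]; exact h0
  have hleμ : ∀ᵐ z ∂μ, Y₁ z.1 ≤ Y₂ z.1 := by
    have h0 : P {ω | ¬ Y₁ ω ≤ Y₂ ω} = 0 := hleY
    rw [ae_iff]
    have hms : MeasurableSet {ω | ¬ Y₁ ω ≤ Y₂ ω} := (measurableSet_le hY₁m hY₂m).compl
    have : {z : Ω × ℝ | ¬ Y₁ z.1 ≤ Y₂ z.1} = Prod.fst ⁻¹' {ω | ¬ Y₁ ω ≤ Y₂ ω} := rfl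
    rw [this, ← Measure.map_apply measurable_fst hms, hμfst]
    exact h0
  -- conclude
  have hval₁ : ∫ z : ℝ × ℝ, z.1 * z.2 ∂π₁ = ∫ z : Ω × ℝ, Y₁ z.1 * z.2 ∂μ := by
    rw [← hμ1, integral_map hf₁m.aemeasurable (f := fun z : ℝ × ℝ => z.1 * z.2)
      (measurable_fst.mul measurable_snd).aestronglyMeasurable]
  have hval₂ : ∫ z : ℝ × ℝ, z.1 * z.2 ∂π₂ = ∫ z : Ω × ℝ, Y₂ z.1 * z.2 ∂μ := by
    rw [hπ₂def, integral_map hf₂m.aemeasurable (f := fun z : ℝ × ℝ => z.1 * z.2)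
      (measurable_fst.mul measurable_snd).aestronglyMeasurable]
  have hmono : ∫ z : Ω × ℝ, Y₁ z.1 * z.2 ∂μ ≤ ∫ z : Ω × ℝ, Y₂ z.1 * z.2 ∂μ := by
    refine integral_mono_ae hint₁ hint₂ ?_
    filter_upwards [hpos, hleμ] with z h1 h2
    exact mul_le_mul_of_nonneg_right h2 h1
  have hmem : (∫ z : ℝ × ℝ, z.1 * z.2 ∂π₂) ∈ S₂ := ⟨π₂, hπ₂prob, hπ₂fst, hπ₂sndR, rfl⟩
  calc ∫ z : ℝ × ℝ, z.1 * z.2 ∂π₁ ≤ ∫ z : ℝ × ℝ, z.1 * z.2 ∂π₂ := by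
        rw [hval₁, hval₂]; exact hmono
    _ ≤ sSup S₂ := le_csSup hbdd hmem
end

section
/- Let p ∈ [1,∞) with conjugate exponent q, and let R ⊆ P_q(ℝ) satisfy Assumption (OT)(i). Then for all X₁, X₂ ∈ L^p(Ω,ℝ) and every θ ∈ [0,1], one has ρ_R((1−θ)X₁ + θX₂) ≤ (1−θ)ρ_R(X₁) + θρ_R(X₂) (convexity of the transport-based risk measure; in particular, Assumption (OT)(ii) is not needed for convexity). -/
open MeasureTheory ENNReal

open ProbabilityTheory in
/-- Transfer of a coupling along a disintegration kernel composed with a random variable. -/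
lemma aux_map_compProd_comap {Ω : Type} [MeasurableSpace Ω] (P : Measure Ω) [SFinite P]
    (Z : Ω → ℝ) (hZ : Measurable Z) (κ : Kernel ℝ ℝ) [IsMarkovKernel κ] :
    (P.compProd (κ.comap Z hZ)).map (fun w : Ω × ℝ => (Z w.1, w.2))
      = (P.map Z).compProd κ := by
  ext s hs
  have mg : Measurable (fun w : Ω × ℝ => (Z w.1, w.2)) :=
    (hZ.comp measurable_fst).prodMk measurable_snd
  rw [Measure.map_apply mg hs,
    Measure.compProd_apply (mg hs),
    Measure.compProd_apply hs,
    lintegral_map (Kernel.measurable_kernel_prodMk_left hs) hZ]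
  refine lintegral_congr fun ω => ?_
  rw [Kernel.comap_apply]
  rfl

/-- Hölder bound for the value of a coupling. -/
lemma aux_integral_le {p q : ℝ≥0∞} (hpq : p⁻¹ + q⁻¹ = 1)
    (π : Measure (ℝ × ℝ)) (A B : ℝ≥0∞) (hA : eLpNorm (fun z : ℝ × ℝ => z.1) p π ≤ A)
    (hB : eLpNorm (fun z : ℝ × ℝ => z.2) q π ≤ B) (hA' : A ≠ ⊤) (hB' : B ≠ ⊤) :
    ∫ z : ℝ × ℝ, z.1 * z.2 ∂π ≤ (A * B).toReal := by
  have hmeas : AEStronglyMeasurable (fun z : ℝ × ℝ => z.1 * z.2) π :=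
    (measurable_fst.mul measurable_snd).aestronglyMeasurable
  have h1 : ∫ z : ℝ × ℝ, z.1 * z.2 ∂π ≤ ∫ z : ℝ × ℝ, ‖z.1 * z.2‖ ∂π :=
    le_trans (le_abs_self _) (by rw [← Real.norm_eq_abs]; exact norm_integral_le_integral_norm _)
  have h2 : ∫ z : ℝ × ℝ, ‖z.1 * z.2‖ ∂π = (eLpNorm (fun z : ℝ × ℝ => z.1 * z.2) 1 π).toReal := by
    rw [integral_eq_lintegral_of_nonneg_ae (Filter.Eventually.of_forall fun z => norm_nonneg _)
      hmeas.norm, eLpNorm_one_eq_lintegral_enorm]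
    congr 1
    refine lintegral_congr fun z => ?_
    rw [ofReal_norm_eq_enorm]
  have hholder : eLpNorm (fun z : ℝ × ℝ => z.1 * z.2) 1 π
      ≤ eLpNorm (fun z : ℝ × ℝ => z.1) p π * eLpNorm (fun z : ℝ × ℝ => z.2) q π := by
    have := eLpNorm_smul_le_mul_eLpNorm (μ := π) (p := p) (q := q) (r := 1)
      (f := fun z : ℝ × ℝ => z.2) (φ := fun z : ℝ × ℝ => z.1)
      measurable_snd.aestronglyMeasurable measurable_fst.aestronglyMeasurable
      (hpqr := ⟨by rw [hpq, inv_one]⟩)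
    exact this
  calc ∫ z : ℝ × ℝ, z.1 * z.2 ∂π ≤ (eLpNorm (fun z : ℝ × ℝ => z.1 * z.2) 1 π).toReal := by
        rw [← h2]; exact h1
    _ ≤ (A * B).toReal := by
        refine ENNReal.toReal_mono (ENNReal.mul_ne_top hA' hB') ?_
        exact le_trans hholder (mul_le_mul' hA hB)

/-- Convexity of the transport-based risk measure: for `R` satisfying (OT)(i) only,
`ρ_R((1−θ)X₁ + θX₂) ≤ (1−θ)ρ_R(X₁) + θρ_R(X₂)` for all `θ ∈ [0,1]`. -/
theorem convexity
    (p q : ℝ≥0∞) (hp1 : 1 ≤ p) (hptop : p ≠ ⊤) (hpq : p⁻¹ + q⁻¹ = 1)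
    (R : Set (Measure ℝ)) (hR1 : OTone q R)
    (Ω : Type) [MeasurableSpace Ω] (P : Measure Ω) [IsProbabilityMeasure P]
    (X₁ X₂ : Ω → ℝ) (hX₁ : MemLp X₁ p P) (hX₂ : MemLp X₂ p P)
    (θ : ℝ) (hθ0 : 0 ≤ θ) (hθ1 : θ ≤ 1) :
    chi R (P.map (fun ω => (1 - θ) * X₁ ω + θ * X₂ ω)) ≤
      (1 - θ) * chi R (P.map X₁) + θ * chi R (P.map X₂) := by
  classical
  obtain ⟨hRprob, hRbdd⟩ := hR1
  set L : ℝ≥0∞ := ⨆ r ∈ R, Mmom q r with hLdef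
  -- replace the random variables by measurable representatives
  set X₁' : Ω → ℝ := hX₁.1.mk X₁ with hX1'def
  set X₂' : Ω → ℝ := hX₂.1.mk X₂ with hX2'def
  have m1 : Measurable X₁' := hX₁.1.stronglyMeasurable_mk.measurable
  have m2 : Measurable X₂' := hX₂.1.stronglyMeasurable_mk.measurable
  have e1 : X₁ =ᵐ[P] X₁' := hX₁.1.ae_eq_mk
  have e2 : X₂ =ᵐ[P] X₂' := hX₂.1.ae_eq_mk
  have hX₁' : MemLp X₁' p P := hX₁.ae_eq e1
  have hX₂' : MemLp X₂' p P := hX₂.ae_eq e2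
  set Z : Ω → ℝ := fun ω => (1 - θ) * X₁' ω + θ * X₂' ω with hZdef
  have mZ : Measurable Z := (m1.const_mul _).add (m2.const_mul _)
  have eZ : (fun ω => (1 - θ) * X₁ ω + θ * X₂ ω) =ᵐ[P] Z := by
    filter_upwards [e1, e2] with ω h1 h2
    simp [hZdef, h1, h2]
  rw [Measure.map_congr eZ, Measure.map_congr e1, Measure.map_congr e2]
  -- the feasible-value sets
  set S : Measure ℝ → Set ℝ := fun m =>
    {v : ℝ | ∃ π : Measure (ℝ × ℝ), IsProbabilityMeasure π ∧
      π.map Prod.fst = m ∧ π.map Prod.snd ∈ R ∧ v = ∫ z : ℝ × ℝ, z.1 * z.2 ∂π} with hSdef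
  have hchi : ∀ m, chi R m = sSup (S m) := fun m => rfl
  rcases Set.eq_empty_or_nonempty R with hRe | ⟨r₀, hr₀⟩
  · -- R empty : all the sets are empty and all values are 0
    have hempty : ∀ m : Measure ℝ, S m = ∅ := by
      intro m
      ext v
      simp only [hSdef, Set.mem_setOf_eq, Set.mem_empty_iff_false, iff_false]
      rintro ⟨π, -, -, hmem, -⟩
      simp [hRe] at hmem
    have h0 : ∀ m : Measure ℝ, chi R m = 0 := fun m => by
      rw [hchi m, hempty m, Real.sSup_empty]
    rw [h0, h0, h0]
    simp
  -- bound on elements of S (P.map W) for W measurable and in L^p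
  have hLne : L ≠ ⊤ := hRbdd.ne
  have eLp_fst : ∀ (π : Measure (ℝ × ℝ)) (W : Ω → ℝ), Measurable W →
      π.map Prod.fst = P.map W → eLpNorm (fun z : ℝ × ℝ => z.1) p π = eLpNorm W p P := by
    intro π W hW hfst
    have h1 : eLpNorm (fun x : ℝ => x) p (π.map Prod.fst)
        = eLpNorm (fun z : ℝ × ℝ => z.1) p π :=
      eLpNorm_map_measure measurable_id.aestronglyMeasurable measurable_fst.aemeasurable
    have h2 : eLpNorm (fun x : ℝ => x) p (P.map W) = eLpNorm W p P :=
      eLpNorm_map_measure measurable_id.aestronglyMeasurable hW.aemeasurable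
    rw [← h1, hfst, h2]
  have eLp_snd : ∀ (π : Measure (ℝ × ℝ)), π.map Prod.snd ∈ R →
      eLpNorm (fun z : ℝ × ℝ => z.2) q π ≤ L := by
    intro π hmem
    have h1 : eLpNorm (fun x : ℝ => x) q (π.map Prod.snd)
        = eLpNorm (fun z : ℝ × ℝ => z.2) q π :=
      eLpNorm_map_measure measurable_id.aestronglyMeasurable measurable_snd.aemeasurable
    have h2 : Mmom q (π.map Prod.snd) ≤ L := le_biSup (fun r => Mmom q r) hmem
    rw [← h1]
    exact h2
  have hbound : ∀ (W : Ω → ℝ), Measurable W → MemLp W p P →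
      ∀ v ∈ S (P.map W), v ≤ ((eLpNorm W p P) * L).toReal := by
    rintro W hW hWp v ⟨π, hπ, hfst, hsnd, rfl⟩
    exact aux_integral_le hpq π _ _ (le_of_eq (eLp_fst π W hW hfst)) (eLp_snd π hsnd)
      hWp.2.ne hLne
  have hbdd1 : BddAbove (S (P.map X₁')) := ⟨_, fun v hv => hbound X₁' m1 hX₁' v hv⟩
  have hbdd2 : BddAbove (S (P.map X₂')) := ⟨_, fun v hv => hbound X₂' m2 hX₂' v hv⟩
  -- instances
  haveI hr₀p : IsProbabilityMeasure r₀ := hRprob r₀ hr₀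
  haveI : IsProbabilityMeasure (P.map Z) := Measure.isProbabilityMeasure_map mZ.aemeasurable
  haveI : IsProbabilityMeasure (P.map X₁') := Measure.isProbabilityMeasure_map m1.aemeasurable
  haveI : IsProbabilityMeasure (P.map X₂') := Measure.isProbabilityMeasure_map m2.aemeasurable
  -- nonemptiness of S (P.map Z) via the product coupling
  have hne : (S (P.map Z)).Nonempty := by
    refine ⟨_, ⟨(P.map Z).prod r₀, inferInstance, ?_, ?_, rfl⟩⟩
    · exact Measure.fst_prod
    · show ((P.map Z).prod r₀).snd ∈ R
      rw [Measure.snd_prod]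
      exact hr₀
  rw [hchi, hchi, hchi]
  refine csSup_le hne ?_
  rintro v ⟨π, hπ, hfst, hsnd, rfl⟩
  -- disintegration of π
  set r : Measure ℝ := π.map Prod.snd with hrdef
  haveI : IsProbabilityMeasure r := hRprob r hsnd
  set κ := π.condKernel with hκdef
  have hfst' : π.fst = P.map Z := hfst
  have hdis : (P.map Z).compProd κ = π := by
    rw [← hfst']
    exact π.disintegrate π.condKernel
  set μ : Measure (Ω × ℝ) := P.compProd (κ.comap Z mZ) with hμdef
  haveI : IsProbabilityMeasure μ := by rw [hμdef]; infer_instance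
  have key : μ.map (fun w : Ω × ℝ => (Z w.1, w.2)) = π := by
    rw [hμdef, aux_map_compProd_comap P Z mZ κ, hdis]
  have mgZ : Measurable (fun w : Ω × ℝ => (Z w.1, w.2)) :=
    (mZ.comp measurable_fst).prodMk measurable_snd
  have hμfst : μ.map Prod.fst = P := Measure.fst_compProd P (κ.comap Z mZ)
  have hμsnd : μ.map Prod.snd = r := by
    rw [hrdef, ← key, Measure.map_map measurable_snd mgZ]
    rfl
  -- the two transported couplings
  have hMP_fst : MeasurePreserving Prod.fst μ P := ⟨measurable_fst, hμfst⟩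
  have hMP_snd : MeasurePreserving Prod.snd μ r := ⟨measurable_snd, hμsnd⟩
  have hsnd_mem : MemLp (fun w : Ω × ℝ => w.2) q μ := by
    have hid : MemLp (fun x : ℝ => x) q r :=
      ⟨measurable_id.aestronglyMeasurable,
        lt_of_le_of_lt (le_biSup (fun r => Mmom q r) hsnd) hRbdd⟩
    exact hid.comp_measurePreserving hMP_snd
  have hpqr : (1 : ℝ≥0∞) / 1 = 1 / p + 1 / q := by
    simp only [one_div]; rw [hpq]; simp
  have hint : ∀ (W : Ω → ℝ), Measurable W → MemLp W p P →
      Integrable (fun w : Ω × ℝ => W w.1 * w.2) μ := by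
    intro W hW hWp
    have hfstW : MemLp (fun w : Ω × ℝ => W w.1) p μ := hWp.comp_measurePreserving hMP_fst
    have := hsnd_mem.smul (r := 1) hfstW (hpqr := ⟨by rw [hpq, inv_one]⟩)
    rw [memLp_one_iff_integrable] at this
    exact this
  have hint1 : Integrable (fun w : Ω × ℝ => X₁' w.1 * w.2) μ := hint X₁' m1 hX₁'
  have hint2 : Integrable (fun w : Ω × ℝ => X₂' w.1 * w.2) μ := hint X₂' m2 hX₂'
  -- value of π as a combination
  have hval : ∫ z : ℝ × ℝ, z.1 * z.2 ∂π
      = (1 - θ) * ∫ w : Ω × ℝ, X₁' w.1 * w.2 ∂μ + θ * ∫ w : Ω × ℝ, X₂' w.1 * w.2 ∂μ := by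
    rw [← key, integral_map mgZ.aemeasurable (f := fun z : ℝ × ℝ => z.1 * z.2)
      (measurable_fst.mul measurable_snd).aestronglyMeasurable]
    have : ∀ w : Ω × ℝ, ((fun w : Ω × ℝ => (Z w.1, w.2)) w).1
          * ((fun w : Ω × ℝ => (Z w.1, w.2)) w).2
        = (1 - θ) * (X₁' w.1 * w.2) + θ * (X₂' w.1 * w.2) := by
      intro w; simp only [hZdef]; ring
    rw [integral_congr_ae (Filter.Eventually.of_forall this),
      integral_add (hint1.const_mul _) (hint2.const_mul _),
      integral_const_mul, integral_const_mul]
  -- construct πᵢ and conclude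
  have hmemS : ∀ (W : Ω → ℝ), Measurable W →
      (∫ w : Ω × ℝ, W w.1 * w.2 ∂μ) ∈ S (P.map W) := by
    intro W hW
    have mgW : Measurable (fun w : Ω × ℝ => (W w.1, w.2)) :=
      (hW.comp measurable_fst).prodMk measurable_snd
    refine ⟨μ.map (fun w : Ω × ℝ => (W w.1, w.2)), ?_, ?_, ?_, ?_⟩
    · exact Measure.isProbabilityMeasure_map mgW.aemeasurable
    · rw [Measure.map_map measurable_fst mgW,
        show (Prod.fst ∘ fun w : Ω × ℝ => (W w.1, w.2)) = W ∘ Prod.fst from rfl,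
        ← Measure.map_map hW measurable_fst, hμfst]
    · rw [Measure.map_map measurable_snd mgW,
        show (Prod.snd ∘ fun w : Ω × ℝ => (W w.1, w.2)) = Prod.snd from rfl, hμsnd]
      exact hsnd
    · rw [integral_map mgW.aemeasurable (f := fun z : ℝ × ℝ => z.1 * z.2)
        (measurable_fst.mul measurable_snd).aestronglyMeasurable]
  have h1le : ∫ w : Ω × ℝ, X₁' w.1 * w.2 ∂μ ≤ sSup (S (P.map X₁')) :=
    le_csSup hbdd1 (hmemS X₁' m1)
  have h2le : ∫ w : Ω × ℝ, X₂' w.1 * w.2 ∂μ ≤ sSup (S (P.map X₂')) :=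
    le_csSup hbdd2 (hmemS X₂' m2)
  rw [hval]
  have hθ1' : 0 ≤ 1 - θ := by linarith
  exact add_le_add (mul_le_mul_of_nonneg_left h1le hθ1')
    (mul_le_mul_of_nonneg_left h2le hθ0)
end

section
/- Let p ∈ [1,∞) with conjugate exponent q, and let R ⊆ P_q(ℝ) satisfy Assumption (OT)(i) with L_R := sup_{r ∈ R} M_q(r). Then for all m₁, m₂ ∈ P_p(ℝ) and every Borel probability measure γ on ℝ² whose first marginal is m₁ and second marginal is m₂, one has |χ_R(m₂) − χ_R(m₁)| ≤ L_R · (∫_{ℝ²} |x₂ − x₁|^p dγ(x₁,x₂))^{1/p}. In particular, χ_R : P_p(ℝ) → ℝ is L_R-Lipschitz continuous with respect to the p-Wasserstein distance W_p. -/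
open MeasureTheory ENNReal

/-- The `p`-Wasserstein distance between two probability measures on `ℝ`, as the infimum
of `(∫ |x₁−x₂|^p dγ)^{1/p}` over couplings `γ` of `m₁` and `m₂`. -/
noncomputable def Wassp (p : ℝ≥0∞) (m₁ m₂ : Measure ℝ) : ℝ≥0∞ :=
  ⨅ γ : {γ : Measure (ℝ × ℝ) // IsProbabilityMeasure γ ∧
      γ.map Prod.fst = m₁ ∧ γ.map Prod.snd = m₂},
    eLpNorm (fun z : ℝ × ℝ => z.1 - z.2) p γ.1

section Aux

open ProbabilityTheory

/-- The feasibility set of the optimal transport problem defining `chi`. -/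
private def chiSet (R : Set (Measure ℝ)) (m : Measure ℝ) : Set ℝ :=
  {v : ℝ | ∃ π : Measure (ℝ × ℝ), IsProbabilityMeasure π ∧
    π.map Prod.fst = m ∧ π.map Prod.snd ∈ R ∧ v = ∫ z : ℝ × ℝ, z.1 * z.2 ∂π}

private lemma chi_eq (R : Set (Measure ℝ)) (m : Measure ℝ) :
    chi R m = sSup (chiSet R m) := rfl

/-- Hölder's inequality for a pair of real functions, integral form. -/
private lemma holder_aux {α : Type*} [MeasurableSpace α] (μ : Measure α)
    (p q : ℝ≥0∞) (hpq : p⁻¹ + q⁻¹ = 1)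
    {f g : α → ℝ} (hf : AEStronglyMeasurable f μ) (hg : AEStronglyMeasurable g μ)
    (hfp : eLpNorm f p μ < ⊤) (hgq : eLpNorm g q μ < ⊤) :
    Integrable (fun a => f a * g a) μ ∧
      |∫ a, f a * g a ∂μ| ≤ (eLpNorm f p μ).toReal * (eLpNorm g q μ).toReal := by
  have h1 : eLpNorm (fun a => f a * g a) 1 μ ≤ eLpNorm f p μ * eLpNorm g q μ := by
    haveI : HolderTriple p q 1 := ⟨by simpa using hpq⟩
    have h := eLpNorm_le_eLpNorm_mul_eLpNorm'_of_norm (p := p) (q := q) (r := 1) hf hg (· * ·) 1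
      (Filter.Eventually.of_forall fun x => by simp [norm_mul])
    simpa using h
  have hint : Integrable (fun a => f a * g a) μ := by
    rw [← memLp_one_iff_integrable]
    exact ⟨hf.mul hg, lt_of_le_of_lt h1 (ENNReal.mul_lt_top hfp hgq)⟩
  refine ⟨hint, ?_⟩
  have h2 : |∫ a, f a * g a ∂μ| ≤ ∫ a, ‖f a * g a‖ ∂μ := by
    simpa using norm_integral_le_integral_norm (μ := μ) (fun a => f a * g a)
  have h3 : ∫ a, ‖f a * g a‖ ∂μ = (eLpNorm (fun a => f a * g a) 1 μ).toReal := by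
    rw [eLpNorm_one_eq_lintegral_enorm, integral_norm_eq_lintegral_enorm hint.1]
  have h4 : (eLpNorm (fun a => f a * g a) 1 μ).toReal
      ≤ (eLpNorm f p μ * eLpNorm g q μ).toReal :=
    ENNReal.toReal_mono (ENNReal.mul_lt_top hfp hgq).ne h1
  rw [ENNReal.toReal_mul] at h4
  linarith

/-- Moments of marginals computed as `eLpNorm`s of coordinate functions. -/
private lemma eLpNorm_marg {δ : Type*} [MeasurableSpace δ] (μ : Measure δ) {φ : δ → ℝ}
    (hφ : Measurable φ) (s : ℝ≥0∞) : eLpNorm φ s μ = Mmom s (μ.map φ) :=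
  (eLpNorm_map_measure measurable_id'.aestronglyMeasurable hφ.aemeasurable).symm

private lemma chiSet_bound (p q : ℝ≥0∞) (hpq : p⁻¹ + q⁻¹ = 1)
    (R : Set (Measure ℝ)) (hR1 : OTone q R) (m : Measure ℝ) (hm : Mmom p m < ⊤) :
    ∀ v ∈ chiSet R m, |v| ≤ (Mmom p m).toReal * (⨆ r ∈ R, Mmom q r).toReal := by
  rintro v ⟨π, hπ, hπ1, hπ2, rfl⟩
  have hL : (⨆ r ∈ R, Mmom q r) < ⊤ := hR1.2
  have hA : eLpNorm (fun z : ℝ × ℝ => z.1) p π = Mmom p m := by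
    rw [eLpNorm_marg π measurable_fst p, hπ1]
  have hB : eLpNorm (fun z : ℝ × ℝ => z.2) q π = Mmom q (π.map Prod.snd) :=
    eLpNorm_marg π measurable_snd q
  have hBle : Mmom q (π.map Prod.snd) ≤ ⨆ r ∈ R, Mmom q r := le_biSup _ hπ2
  have h := (holder_aux π p q hpq (f := fun z : ℝ × ℝ => z.1) (g := fun z : ℝ × ℝ => z.2)
      measurable_fst.aestronglyMeasurable measurable_snd.aestronglyMeasurable
      (by rw [hA]; exact hm) (by rw [hB]; exact lt_of_le_of_lt hBle hL)).2
  calc |∫ z : ℝ × ℝ, z.1 * z.2 ∂π|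
      ≤ (eLpNorm (fun z : ℝ × ℝ => z.1) p π).toReal
        * (eLpNorm (fun z : ℝ × ℝ => z.2) q π).toReal := h
    _ = (Mmom p m).toReal * (Mmom q (π.map Prod.snd)).toReal := by rw [hA, hB]
    _ ≤ (Mmom p m).toReal * (⨆ r ∈ R, Mmom q r).toReal :=
        mul_le_mul_of_nonneg_left (ENNReal.toReal_mono hL.ne hBle) ENNReal.toReal_nonneg

private lemma chiSet_bddAbove (p q : ℝ≥0∞) (hpq : p⁻¹ + q⁻¹ = 1)
    (R : Set (Measure ℝ)) (hR1 : OTone q R) (m : Measure ℝ) (hm : Mmom p m < ⊤) :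
    BddAbove (chiSet R m) :=
  ⟨(Mmom p m).toReal * (⨆ r ∈ R, Mmom q r).toReal,
    fun v hv => (abs_le.mp (chiSet_bound p q hpq R hR1 m hm v hv)).2⟩

private lemma chiSet_nonempty (R : Set (Measure ℝ)) {r₀ : Measure ℝ} (hr₀ : r₀ ∈ R)
    (hr₀p : IsProbabilityMeasure r₀) (m : Measure ℝ) (hm : IsProbabilityMeasure m) :
    (chiSet R m).Nonempty := by
  refine ⟨_, ⟨m.prod r₀, inferInstance, Measure.fst_prod, ?_, rfl⟩⟩
  have h : (m.prod r₀).map Prod.snd = r₀ := Measure.snd_prod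
  rw [h]; exact hr₀

/-- The key one-sided estimate, proved by gluing a plan for `m₁` with the coupling `γ`
along `m₁`, using the disintegration (conditional kernel) of the plan. -/
private lemma chi_le (p q : ℝ≥0∞) (hp1 : 1 ≤ p) (hpq : p⁻¹ + q⁻¹ = 1)
    (R : Set (Measure ℝ)) (hR1 : OTone q R)
    (m₁ m₂ : Measure ℝ) (hm₁ : IsProbabilityMeasure m₁) (hm₁p : Mmom p m₁ < ⊤)
    (hm₂ : IsProbabilityMeasure m₂) (hm₂p : Mmom p m₂ < ⊤)
    (γ : Measure (ℝ × ℝ)) (hγ : IsProbabilityMeasure γ)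
    (hγ1 : γ.map Prod.fst = m₁) (hγ2 : γ.map Prod.snd = m₂) :
    chi R m₁ ≤ chi R m₂ +
      (⨆ r ∈ R, Mmom q r).toReal * (eLpNorm (fun z : ℝ × ℝ => z.1 - z.2) p γ).toReal := by
  haveI := hγ; haveI := hm₁; haveI := hm₂
  have hL : (⨆ r ∈ R, Mmom q r) < ⊤ := hR1.2
  rcases Set.eq_empty_or_nonempty R with hR | ⟨r₀, hr₀⟩
  · have h1 : ∀ m : Measure ℝ, chiSet R m = ∅ := by
      intro m
      apply Set.eq_empty_iff_forall_notMem.mpr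
      rintro v ⟨π, -, -, hmem, -⟩
      simp [hR] at hmem
    rw [chi_eq, chi_eq, h1 m₁, h1 m₂, Real.sSup_empty]
    simpa using mul_nonneg ENNReal.toReal_nonneg (ENNReal.toReal_nonneg
      (a := eLpNorm (fun z : ℝ × ℝ => z.1 - z.2) p γ))
  haveI hr₀p : IsProbabilityMeasure r₀ := hR1.1 r₀ hr₀
  -- finiteness of the transport cost of `γ`
  have hγfin : eLpNorm (fun z : ℝ × ℝ => z.1 - z.2) p γ < ⊤ := by
    have hsub : (fun z : ℝ × ℝ => z.1 - z.2)
        = (fun z : ℝ × ℝ => z.1) - (fun z : ℝ × ℝ => z.2) := rfl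
    rw [hsub]
    refine lt_of_le_of_lt (eLpNorm_sub_le measurable_fst.aestronglyMeasurable
      measurable_snd.aestronglyMeasurable hp1) ?_
    rw [eLpNorm_marg γ measurable_fst p, eLpNorm_marg γ measurable_snd p, hγ1, hγ2]
    exact ENNReal.add_lt_top.mpr ⟨hm₁p, hm₂p⟩
  rw [chi_eq, chi_eq]
  refine csSup_le (chiSet_nonempty R hr₀ hr₀p m₁ hm₁) ?_
  rintro v ⟨π, hπ, hπ1, hπ2, rfl⟩
  haveI := hπ
  have hrR : π.map Prod.snd ∈ R := hπ2
  haveI hrprob : IsProbabilityMeasure (π.map Prod.snd) := hR1.1 _ hrR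
  -- disintegration of the plan π
  set κ : Kernel ℝ ℝ := π.condKernel with hκdef
  have hdis : π.fst ⊗ₘ κ = π := π.disintegrate κ
  have hfst : π.fst = m₁ := hπ1
  -- glued measure on (ℝ × ℝ) × ℝ
  set κ' : Kernel (ℝ × ℝ) ℝ := κ.comap Prod.fst measurable_fst with hκ'def
  set μ : Measure ((ℝ × ℝ) × ℝ) := γ ⊗ₘ κ' with hμdef
  haveI : IsProbabilityMeasure μ := by rw [hμdef]; infer_instance
  -- the (x₁, y)-marginal of μ is π
  have hkey : μ.map (fun w : (ℝ × ℝ) × ℝ => (w.1.1, w.2)) = π := by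
    ext s hs
    have hmeasφ : Measurable (fun w : (ℝ × ℝ) × ℝ => (w.1.1, w.2)) :=
      measurable_fst.fst.prodMk measurable_snd
    rw [Measure.map_apply hmeasφ hs]
    rw [hμdef, Measure.compProd_apply (hmeasφ hs)]
    have heq : ∀ z : ℝ × ℝ,
        κ' z (Prod.mk z ⁻¹' ((fun w : (ℝ × ℝ) × ℝ => (w.1.1, w.2)) ⁻¹' s))
        = κ z.1 (Prod.mk z.1 ⁻¹' s) := by
      intro z
      rw [hκ'def, Kernel.comap_apply]
      congr 1
    simp_rw [heq]
    have hmeas : Measurable fun x : ℝ => κ x (Prod.mk x ⁻¹' s) :=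
      Kernel.measurable_kernel_prodMk_left hs
    rw [show ∫⁻ z : ℝ × ℝ, κ z.1 (Prod.mk z.1 ⁻¹' s) ∂γ
        = ∫⁻ x, κ x (Prod.mk x ⁻¹' s) ∂(γ.map Prod.fst) from
      (lintegral_map hmeas measurable_fst).symm, hγ1, ← hfst]
    conv_rhs => rw [← hdis]
    rw [Measure.compProd_apply hs]
  -- marginals of μ
  have hmap2 : μ.map (fun w : (ℝ × ℝ) × ℝ => w.2) = π.map Prod.snd := by
    have h : (fun w : (ℝ × ℝ) × ℝ => w.2)
        = Prod.snd ∘ (fun w : (ℝ × ℝ) × ℝ => (w.1.1, w.2)) := rfl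
    rw [h, ← Measure.map_map measurable_snd (measurable_fst.fst.prodMk measurable_snd), hkey]
  have hmapγ : μ.map Prod.fst = γ := by
    rw [hμdef]; exact Measure.fst_compProd γ κ'
  have hmap12 : μ.map (fun w : (ℝ × ℝ) × ℝ => w.1.2) = m₂ := by
    have h : (fun w : (ℝ × ℝ) × ℝ => w.1.2)
        = Prod.snd ∘ (Prod.fst : (ℝ × ℝ) × ℝ → ℝ × ℝ) := rfl
    rw [h, ← Measure.map_map measurable_snd measurable_fst, hmapγ, hγ2]
  have hmap11 : μ.map (fun w : (ℝ × ℝ) × ℝ => w.1.1) = m₁ := by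
    have h : (fun w : (ℝ × ℝ) × ℝ => w.1.1)
        = Prod.fst ∘ (fun w : (ℝ × ℝ) × ℝ => (w.1.1, w.2)) := rfl
    rw [h, ← Measure.map_map measurable_fst (measurable_fst.fst.prodMk measurable_snd),
      hkey, hπ1]
  -- eLpNorm identities on μ
  have hA1 : eLpNorm (fun w : (ℝ × ℝ) × ℝ => w.1.1) p μ = Mmom p m₁ := by
    rw [eLpNorm_marg μ measurable_fst.fst p, hmap11]
  have hA2 : eLpNorm (fun w : (ℝ × ℝ) × ℝ => w.1.2) p μ = Mmom p m₂ := by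
    rw [eLpNorm_marg μ measurable_fst.snd p, hmap12]
  have hB : eLpNorm (fun w : (ℝ × ℝ) × ℝ => w.2) q μ = Mmom q (π.map Prod.snd) := by
    rw [eLpNorm_marg μ measurable_snd q, hmap2]
  have hBle : Mmom q (π.map Prod.snd) ≤ ⨆ r ∈ R, Mmom q r := le_biSup _ hrR
  have hD : eLpNorm (fun w : (ℝ × ℝ) × ℝ => w.1.1 - w.1.2) p μ
      = eLpNorm (fun z : ℝ × ℝ => z.1 - z.2) p γ := by
    rw [← hmapγ, eLpNorm_map_measure (g := fun z : ℝ × ℝ => z.1 - z.2)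
      ((measurable_fst.sub measurable_snd).aestronglyMeasurable) measurable_fst.aemeasurable]
    rfl
  -- Hölder on μ
  have H1 := holder_aux μ p q hpq (f := fun w : (ℝ × ℝ) × ℝ => w.1.1)
    (g := fun w : (ℝ × ℝ) × ℝ => w.2)
    measurable_fst.fst.aestronglyMeasurable measurable_snd.aestronglyMeasurable
    (by rw [hA1]; exact hm₁p) (by rw [hB]; exact lt_of_le_of_lt hBle hL)
  have H2 := holder_aux μ p q hpq (f := fun w : (ℝ × ℝ) × ℝ => w.1.2)
    (g := fun w : (ℝ × ℝ) × ℝ => w.2)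
    measurable_fst.snd.aestronglyMeasurable measurable_snd.aestronglyMeasurable
    (by rw [hA2]; exact hm₂p) (by rw [hB]; exact lt_of_le_of_lt hBle hL)
  have H3 := holder_aux μ p q hpq (f := fun w : (ℝ × ℝ) × ℝ => w.1.1 - w.1.2)
    (g := fun w : (ℝ × ℝ) × ℝ => w.2)
    (measurable_fst.fst.sub measurable_fst.snd).aestronglyMeasurable
    measurable_snd.aestronglyMeasurable
    (by rw [hD]; exact hγfin) (by rw [hB]; exact lt_of_le_of_lt hBle hL)
  -- the modified plan for m₂
  set π' : Measure (ℝ × ℝ) := μ.map (fun w : (ℝ × ℝ) × ℝ => (w.1.2, w.2)) with hπ'def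
  have hmeasψ : Measurable (fun w : (ℝ × ℝ) × ℝ => (w.1.2, w.2)) :=
    measurable_fst.snd.prodMk measurable_snd
  haveI : IsProbabilityMeasure π' := Measure.isProbabilityMeasure_map hmeasψ.aemeasurable
  have hπ'1 : π'.map Prod.fst = m₂ := by
    rw [hπ'def, Measure.map_map measurable_fst hmeasψ]; exact hmap12
  have hπ'2 : π'.map Prod.snd = π.map Prod.snd := by
    rw [hπ'def, Measure.map_map measurable_snd hmeasψ]; exact hmap2
  have hmem : (∫ z : ℝ × ℝ, z.1 * z.2 ∂π') ∈ chiSet R m₂ :=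
    ⟨π', inferInstance, hπ'1, by rw [hπ'2]; exact hrR, rfl⟩
  -- integral identities
  have hv : ∫ z : ℝ × ℝ, z.1 * z.2 ∂π = ∫ w : (ℝ × ℝ) × ℝ, w.1.1 * w.2 ∂μ := by
    conv_lhs => rw [← hkey]
    exact integral_map (measurable_fst.fst.prodMk measurable_snd).aemeasurable
      (measurable_fst.mul measurable_snd).aestronglyMeasurable
  have hv' : ∫ z : ℝ × ℝ, z.1 * z.2 ∂π' = ∫ w : (ℝ × ℝ) × ℝ, w.1.2 * w.2 ∂μ := by
    rw [hπ'def]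
    exact integral_map hmeasψ.aemeasurable
      (measurable_fst.mul measurable_snd).aestronglyMeasurable
  -- the key estimate
  have key : ∫ w : (ℝ × ℝ) × ℝ, w.1.1 * w.2 ∂μ - ∫ w : (ℝ × ℝ) × ℝ, w.1.2 * w.2 ∂μ
      ≤ (⨆ r ∈ R, Mmom q r).toReal
        * (eLpNorm (fun z : ℝ × ℝ => z.1 - z.2) p γ).toReal := by
    rw [← integral_sub H1.1 H2.1]
    have hre : ∀ w : (ℝ × ℝ) × ℝ, w.1.1 * w.2 - w.1.2 * w.2 = (w.1.1 - w.1.2) * w.2 :=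
      fun w => by ring
    simp_rw [hre]
    calc ∫ w : (ℝ × ℝ) × ℝ, (w.1.1 - w.1.2) * w.2 ∂μ
        ≤ |∫ w : (ℝ × ℝ) × ℝ, (w.1.1 - w.1.2) * w.2 ∂μ| := le_abs_self _
      _ ≤ (eLpNorm (fun w : (ℝ × ℝ) × ℝ => w.1.1 - w.1.2) p μ).toReal
          * (eLpNorm (fun w : (ℝ × ℝ) × ℝ => w.2) q μ).toReal := H3.2
      _ = (eLpNorm (fun z : ℝ × ℝ => z.1 - z.2) p γ).toReal
          * (Mmom q (π.map Prod.snd)).toReal := by rw [hD, hB]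
      _ ≤ (eLpNorm (fun z : ℝ × ℝ => z.1 - z.2) p γ).toReal
          * (⨆ r ∈ R, Mmom q r).toReal :=
          mul_le_mul_of_nonneg_left (ENNReal.toReal_mono hL.ne hBle) ENNReal.toReal_nonneg
      _ = (⨆ r ∈ R, Mmom q r).toReal
          * (eLpNorm (fun z : ℝ × ℝ => z.1 - z.2) p γ).toReal := mul_comm _ _
  have hle2 : (∫ z : ℝ × ℝ, z.1 * z.2 ∂π') ≤ sSup (chiSet R m₂) :=
    le_csSup (chiSet_bddAbove p q hpq R hR1 m₂ hm₂p) hmem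
  linarith [hv, hv', key, hle2]

end Aux

set_option maxHeartbeats 1000000 in
private lemma chi_lipschitz_part1
    (p q : ℝ≥0∞) (hp1 : 1 ≤ p) (hpq : p⁻¹ + q⁻¹ = 1)
    (R : Set (Measure ℝ)) (hR1 : OTone q R) :
    ∀ m₁ m₂ : Measure ℝ, IsProbabilityMeasure m₁ → Mmom p m₁ < ⊤ →
      IsProbabilityMeasure m₂ → Mmom p m₂ < ⊤ →
      ∀ γ : Measure (ℝ × ℝ), IsProbabilityMeasure γ →
        γ.map Prod.fst = m₁ → γ.map Prod.snd = m₂ →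
        |chi R m₂ - chi R m₁| ≤
          (⨆ r ∈ R, Mmom q r).toReal
            * (eLpNorm (fun z : ℝ × ℝ => z.1 - z.2) p γ).toReal := by
    intro m₁ m₂ h₁ h₁p h₂ h₂p γ hγ hγ1 hγ2
    haveI := hγ
    have d1 := chi_le p q hp1 hpq R hR1 m₁ m₂ h₁ h₁p h₂ h₂p γ hγ hγ1 hγ2
    set γs : Measure (ℝ × ℝ) := γ.map Prod.swap with hγsdef
    haveI hγs : IsProbabilityMeasure γs := Measure.isProbabilityMeasure_map
      measurable_swap.aemeasurable
    have hs1 : γs.map Prod.fst = m₂ := by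
      rw [hγsdef, Measure.map_map measurable_fst measurable_swap]; exact hγ2
    have hs2 : γs.map Prod.snd = m₁ := by
      rw [hγsdef, Measure.map_map measurable_snd measurable_swap]; exact hγ1
    have hsE : eLpNorm (fun z : ℝ × ℝ => z.1 - z.2) p γs
        = eLpNorm (fun z : ℝ × ℝ => z.1 - z.2) p γ := by
      rw [hγsdef, eLpNorm_map_measure (g := fun z : ℝ × ℝ => z.1 - z.2)
        (measurable_fst.sub measurable_snd).aestronglyMeasurable
        measurable_swap.aemeasurable]
      have h : (fun z : ℝ × ℝ => z.1 - z.2) ∘ Prod.swap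
          = -(fun z : ℝ × ℝ => z.1 - z.2) := by
        funext z; simp [Prod.swap]
      rw [h, eLpNorm_neg]
    have d2 := chi_le p q hp1 hpq R hR1 m₂ m₁ h₂ h₂p h₁ h₁p γs hγs hs1 hs2
    rw [hsE] at d2
    rw [abs_sub_le_iff]
    constructor <;> linarith

set_option maxHeartbeats 1000000 in
private lemma chi_lipschitz_part2
    (p q : ℝ≥0∞) (hp1 : 1 ≤ p) (hpq : p⁻¹ + q⁻¹ = 1)
    (R : Set (Measure ℝ)) (hR1 : OTone q R) :
    ∀ m₁ m₂ : Measure ℝ, IsProbabilityMeasure m₁ → Mmom p m₁ < ⊤ →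
      IsProbabilityMeasure m₂ → Mmom p m₂ < ⊤ →
      |chi R m₂ - chi R m₁| ≤ (⨆ r ∈ R, Mmom q r).toReal * (Wassp p m₁ m₂).toReal := by
  have part1 := chi_lipschitz_part1 p q hp1 hpq R hR1
  intro m₁ m₂ h₁ h₁p h₂ h₂p
  haveI := h₁; haveI := h₂
  have hL : (⨆ r ∈ R, Mmom q r) < ⊤ := hR1.2
  have hprod1 : (m₁.prod m₂).map Prod.fst = m₁ := Measure.fst_prod
  have hprod2 : (m₁.prod m₂).map Prod.snd = m₂ := Measure.snd_prod
  have hprodfin : eLpNorm (fun z : ℝ × ℝ => z.1 - z.2) p (m₁.prod m₂) < ⊤ := by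
    have hsub : (fun z : ℝ × ℝ => z.1 - z.2)
        = (fun z : ℝ × ℝ => z.1) - (fun z : ℝ × ℝ => z.2) := rfl
    rw [hsub]
    refine lt_of_le_of_lt (eLpNorm_sub_le measurable_fst.aestronglyMeasurable
      measurable_snd.aestronglyMeasurable hp1) ?_
    rw [eLpNorm_marg _ measurable_fst p, eLpNorm_marg _ measurable_snd p, hprod1, hprod2]
    exact ENNReal.add_lt_top.mpr ⟨h₁p, h₂p⟩
  have hfinW : Wassp p m₁ m₂ < ⊤ := by
    have hWle : Wassp p m₁ m₂ ≤ eLpNorm (fun z : ℝ × ℝ => z.1 - z.2) p (m₁.prod m₂) := by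
      unfold Wassp
      exact iInf_le (fun γ : {γ : Measure (ℝ × ℝ) // IsProbabilityMeasure γ ∧
          γ.map Prod.fst = m₁ ∧ γ.map Prod.snd = m₂} =>
          eLpNorm (fun z : ℝ × ℝ => z.1 - z.2) p γ.1)
        ⟨m₁.prod m₂, inferInstance, hprod1, hprod2⟩
    exact lt_of_le_of_lt hWle hprodfin
  have main : ∀ ε : ℝ, 0 < ε →
      |chi R m₂ - chi R m₁|
        ≤ (⨆ r ∈ R, Mmom q r).toReal * (Wassp p m₁ m₂).toReal + ε := by
    intro ε hε
    set L : ℝ := (⨆ r ∈ R, Mmom q r).toReal with hLdef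
    have hLnn : (0:ℝ) ≤ L := ENNReal.toReal_nonneg
    have hε' : (0:ℝ) < ε / (L + 1) := by positivity
    have hlt0 : Wassp p m₁ m₂ < Wassp p m₁ m₂ + ENNReal.ofReal (ε / (L + 1)) :=
      ENNReal.lt_add_right hfinW.ne (by simp [ENNReal.ofReal_eq_zero]; linarith)
    have hlt : (⨅ γ : {γ : Measure (ℝ × ℝ) // IsProbabilityMeasure γ ∧
          γ.map Prod.fst = m₁ ∧ γ.map Prod.snd = m₂},
        eLpNorm (fun z : ℝ × ℝ => z.1 - z.2) p γ.1)
        < Wassp p m₁ m₂ + ENNReal.ofReal (ε / (L + 1)) := hlt0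
    obtain ⟨⟨γ, hγp, hγ1, hγ2⟩, hγlt⟩ := iInf_lt_iff.mp hlt
    have hb := part1 m₁ m₂ h₁ h₁p h₂ h₂p γ hγp hγ1 hγ2
    have hne : Wassp p m₁ m₂ + ENNReal.ofReal (ε / (L + 1)) ≠ ⊤ :=
      (ENNReal.add_lt_top.mpr ⟨hfinW, ENNReal.ofReal_lt_top⟩).ne
    have htr : (eLpNorm (fun z : ℝ × ℝ => z.1 - z.2) p γ).toReal
        ≤ (Wassp p m₁ m₂).toReal + ε / (L + 1) := by
      have h := ENNReal.toReal_mono hne hγlt.le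
      rwa [ENNReal.toReal_add hfinW.ne ENNReal.ofReal_ne_top,
        ENNReal.toReal_ofReal hε'.le] at h
    calc |chi R m₂ - chi R m₁|
        ≤ L * (eLpNorm (fun z : ℝ × ℝ => z.1 - z.2) p γ).toReal := hb
      _ ≤ L * ((Wassp p m₁ m₂).toReal + ε / (L + 1)) :=
          mul_le_mul_of_nonneg_left htr hLnn
      _ = L * (Wassp p m₁ m₂).toReal + (L * ε) / (L + 1) := by ring
      _ ≤ L * (Wassp p m₁ m₂).toReal + ε := by
          have h2 : (L * ε) / (L + 1) ≤ ε := by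
            rw [div_le_iff₀ (by linarith)]
            nlinarith
          linarith
  by_contra hcon
  push_neg at hcon
  have := main ((|chi R m₂ - chi R m₁|
    - (⨆ r ∈ R, Mmom q r).toReal * (Wassp p m₁ m₂).toReal) / 2) (by linarith)
  linarith

/-- Lipschitz continuity of `χ_R`: for `R` satisfying (OT)(i) with `L_R = sup_{r ∈ R} M_q(r)`,
for any coupling `γ` of `m₁, m₂ ∈ P_p(ℝ)` one has
`|χ_R(m₂) − χ_R(m₁)| ≤ L_R · (∫ |x₂ − x₁|^p dγ)^{1/p}`; in particular `χ_R` is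
`L_R`-Lipschitz for the `p`-Wasserstein distance. -/
theorem chi_lipschitz
    (p q : ℝ≥0∞) (hp1 : 1 ≤ p) (hptop : p ≠ ⊤) (hpq : p⁻¹ + q⁻¹ = 1)
    (R : Set (Measure ℝ)) (hR1 : OTone q R) :
    (∀ m₁ m₂ : Measure ℝ, IsProbabilityMeasure m₁ → Mmom p m₁ < ⊤ →
      IsProbabilityMeasure m₂ → Mmom p m₂ < ⊤ →
      ∀ γ : Measure (ℝ × ℝ), IsProbabilityMeasure γ →
        γ.map Prod.fst = m₁ → γ.map Prod.snd = m₂ →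
        |chi R m₂ - chi R m₁| ≤
          (⨆ r ∈ R, Mmom q r).toReal * (eLpNorm (fun z : ℝ × ℝ => z.1 - z.2) p γ).toReal) ∧
    (∀ m₁ m₂ : Measure ℝ, IsProbabilityMeasure m₁ → Mmom p m₁ < ⊤ →
      IsProbabilityMeasure m₂ → Mmom p m₂ < ⊤ →
      |chi R m₂ - chi R m₁| ≤ (⨆ r ∈ R, Mmom q r).toReal * (Wassp p m₁ m₂).toReal) := by
  exact ⟨chi_lipschitz_part1 p q hp1 hpq R hR1, chi_lipschitz_part2 p q hp1 hpq R hR1⟩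
end

section
/- Let p ∈ [1,∞) with conjugate exponent q, let ρ : L^p(Ω,ℝ) → ℝ be a coherent risk measure, and let 𝔜 ⊆ L^q(Ω,ℝ) be a bounded set of almost surely nonnegative random variables with E[Y] = 1 for every Y ∈ 𝔜, such that ρ(X) = sup_{Y ∈ 𝔜} E[XY] for every X ∈ L^p(Ω,ℝ). Define R := {ℙ_Y : Y ∈ 𝔜} ⊆ P_q(ℝ), the set of laws of elements of 𝔜. Then R satisfies Assumptions (OT)(i) and (OT)(ii), and ρ(X) ≤ ρ_R(X) for every X ∈ L^p(Ω,ℝ). -/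
open MeasureTheory ENNReal

/-- Refined characterization, first part: if a coherent risk measure `ρ` on `L^p` admits
the dual representation `ρ(X) = sup_{Y ∈ 𝔜} E[XY]` over a bounded set `𝔜 ⊆ L^q` of a.s.
nonnegative random variables of unit expectation, then the set `R` of laws of elements of
`𝔜` satisfies (OT)(i)–(ii) and `ρ(X) ≤ ρ_R(X)` for every `X ∈ L^p`. -/
theorem dual_representation_gives_upper_bound
    (p q : ℝ≥0∞) (hp1 : 1 ≤ p) (hptop : p ≠ ⊤) (hpq : p⁻¹ + q⁻¹ = 1)
    (Ω : Type) [MeasurableSpace Ω] (P : Measure Ω) [IsProbabilityMeasure P]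
    (ρ : (Ω → ℝ) → ℝ)
    (htrans : ∀ X : Ω → ℝ, MemLp X p P → ∀ α : ℝ, ρ (fun ω => X ω + α) = ρ X + α)
    (hhom : ∀ X : Ω → ℝ, MemLp X p P → ∀ δ : ℝ, 0 ≤ δ → ρ (fun ω => δ * X ω) = δ * ρ X)
    (hmono : ∀ X₁ X₂ : Ω → ℝ, MemLp X₁ p P → MemLp X₂ p P →
      (∀ᵐ ω ∂P, X₁ ω ≤ X₂ ω) → ρ X₁ ≤ ρ X₂)
    (hconv : ∀ X₁ X₂ : Ω → ℝ, MemLp X₁ p P → MemLp X₂ p P → ∀ θ : ℝ, 0 ≤ θ → θ ≤ 1 →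
      ρ (fun ω => (1 - θ) * X₁ ω + θ * X₂ ω) ≤ (1 - θ) * ρ X₁ + θ * ρ X₂)
    (𝔜 : Set (Ω → ℝ))
    (h𝔜mem : ∀ Y ∈ 𝔜, MemLp Y q P)
    (h𝔜pos : ∀ Y ∈ 𝔜, ∀ᵐ ω ∂P, 0 ≤ Y ω)
    (h𝔜exp : ∀ Y ∈ 𝔜, ∫ ω, Y ω ∂P = 1)
    (h𝔜bdd : ∃ C : ℝ≥0∞, C < ⊤ ∧ ∀ Y ∈ 𝔜, eLpNorm Y q P ≤ C)
    (hrep : ∀ X : Ω → ℝ, MemLp X p P →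
      ρ X = sSup {v : ℝ | ∃ Y ∈ 𝔜, v = ∫ ω, X ω * Y ω ∂P}) :
    OTone q {r : Measure ℝ | ∃ Y ∈ 𝔜, r = P.map Y} ∧
    OTtwo {r : Measure ℝ | ∃ Y ∈ 𝔜, r = P.map Y} ∧
    ∀ X : Ω → ℝ, MemLp X p P →
      ρ X ≤ chi {r : Measure ℝ | ∃ Y ∈ 𝔜, r = P.map Y} (P.map X) := by
  obtain ⟨C, hC, hCb⟩ := h𝔜bdd
  have hq1 : 1 ≤ q := by
    rw [← ENNReal.inv_le_one]
    calc q⁻¹ ≤ p⁻¹ + q⁻¹ := le_add_self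
    _ = 1 := hpq
  have hmeas : ∀ Y ∈ 𝔜, AEMeasurable Y P := fun Y hY => (h𝔜mem Y hY).1.aemeasurable
  have hMmom : ∀ Y ∈ 𝔜, Mmom q (P.map Y) = eLpNorm Y q P := by
    intro Y hY
    have h : eLpNorm (fun x : ℝ => x) q (P.map Y) = eLpNorm ((fun x : ℝ => x) ∘ Y) q P :=
      eLpNorm_map_measure aestronglyMeasurable_id (hmeas Y hY)
    unfold Mmom
    rw [h]
    rfl
  refine ⟨⟨?_, ?_⟩, ?_, ?_⟩
  · rintro r ⟨Y, hY, rfl⟩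
    exact Measure.isProbabilityMeasure_map (hmeas Y hY)
  · refine lt_of_le_of_lt (iSup₂_le ?_) hC
    rintro r ⟨Y, hY, rfl⟩
    rw [hMmom Y hY]
    exact hCb Y hY
  · rintro r ⟨Y, hY, rfl⟩
    constructor
    · rw [Measure.map_apply_of_aemeasurable (hmeas Y hY) measurableSet_Iio]
      have := (h𝔜pos Y hY)
      rw [MeasureTheory.ae_iff] at this
      convert this using 2
      ext ω; simp [not_le]
    · have h : ∫⁻ y, ENNReal.ofReal y ∂(P.map Y) = ∫⁻ ω, ENNReal.ofReal (Y ω) ∂P :=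
        lintegral_map' ENNReal.measurable_ofReal.aemeasurable (hmeas Y hY)
      rw [h]
      have hint : Integrable Y P := (h𝔜mem Y hY).integrable hq1
      rw [← ofReal_integral_eq_lintegral_ofReal hint (h𝔜pos Y hY), h𝔜exp Y hY,
        ENNReal.ofReal_one]
  · intro X hX
    rw [hrep X hX]
    rcases Set.eq_empty_or_nonempty 𝔜 with h𝔜 | ⟨Y₀, hY₀⟩
    · have h1 : {v : ℝ | ∃ Y ∈ 𝔜, v = ∫ ω, X ω * Y ω ∂P} = ∅ := by
        simp [h𝔜]
      have h2 : {v : ℝ | ∃ π : Measure (ℝ × ℝ), IsProbabilityMeasure π ∧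
          π.map Prod.fst = P.map X ∧
          π.map Prod.snd ∈ {r : Measure ℝ | ∃ Y ∈ 𝔜, r = P.map Y} ∧
          v = ∫ z : ℝ × ℝ, z.1 * z.2 ∂π} = ∅ := by
        simp [h𝔜]
      rw [chi, h1, h2]
    · -- key eLpNorm facts for marginals
      have hmfacts : ∀ π : Measure (ℝ × ℝ), IsProbabilityMeasure π →
          π.map Prod.fst = P.map X →
          π.map Prod.snd ∈ {r : Measure ℝ | ∃ Y ∈ 𝔜, r = P.map Y} →
          (∫ z : ℝ × ℝ, z.1 * z.2 ∂π) ≤ (eLpNorm X p P * C).toReal := by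
        rintro π hπ hfst ⟨Y, hY, hsnd⟩
        have hfst' : eLpNorm (Prod.fst : ℝ × ℝ → ℝ) p π = eLpNorm X p P := by
          have h1 : eLpNorm (fun x : ℝ => x) p (π.map Prod.fst)
              = eLpNorm ((fun x : ℝ => x) ∘ Prod.fst) p π :=
            eLpNorm_map_measure aestronglyMeasurable_id measurable_fst.aemeasurable
          have h2 : eLpNorm (fun x : ℝ => x) p (P.map X)
              = eLpNorm ((fun x : ℝ => x) ∘ X) p P :=
            eLpNorm_map_measure aestronglyMeasurable_id hX.1.aemeasurable
          rw [hfst] at h1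
          rw [h2] at h1
          exact h1.symm
        have hsnd' : eLpNorm (Prod.snd : ℝ × ℝ → ℝ) q π = eLpNorm Y q P := by
          have h1 : eLpNorm (fun x : ℝ => x) q (π.map Prod.snd)
              = eLpNorm ((fun x : ℝ => x) ∘ Prod.snd) q π :=
            eLpNorm_map_measure aestronglyMeasurable_id measurable_snd.aemeasurable
          have h2 : eLpNorm (fun x : ℝ => x) q (P.map Y)
              = eLpNorm ((fun x : ℝ => x) ∘ Y) q P :=
            eLpNorm_map_measure aestronglyMeasurable_id (hmeas Y hY)
          rw [hsnd] at h1
          rw [h2] at h1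
          exact h1.symm
        have hholder : eLpNorm (fun z : ℝ × ℝ => z.1 * z.2) 1 π
            ≤ eLpNorm (Prod.fst : ℝ × ℝ → ℝ) p π * eLpNorm (Prod.snd : ℝ × ℝ → ℝ) q π := by
          have := eLpNorm_smul_le_mul_eLpNorm (μ := π) (p := p) (q := q) (r := 1)
            (f := (Prod.snd : ℝ × ℝ → ℝ)) (φ := (Prod.fst : ℝ × ℝ → ℝ))
            measurable_snd.aestronglyMeasurable measurable_fst.aestronglyMeasurable
            (hpqr := holderConjugate_iff.mpr hpq)
          exact this
        have hbound : eLpNorm (fun z : ℝ × ℝ => z.1 * z.2) 1 π ≤ eLpNorm X p P * C := by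
          refine hholder.trans ?_
          rw [hfst', hsnd']
          exact mul_le_mul_right (hCb Y hY) _
        have hint : (∫ z : ℝ × ℝ, z.1 * z.2 ∂π)
            ≤ (eLpNorm (fun z : ℝ × ℝ => z.1 * z.2) 1 π).toReal := by
          refine le_trans (le_abs_self _) ?_
          rw [← Real.norm_eq_abs]
          refine le_trans (norm_integral_le_lintegral_norm _) ?_
          rw [eLpNorm_one_eq_lintegral_enorm]
          simp_rw [ofReal_norm_eq_enorm]
          exact le_rfl
        refine hint.trans ?_
        exact ENNReal.toReal_mono (ENNReal.mul_ne_top hX.2.ne hC.ne) hbound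
      refine csSup_le_csSup ?_ ⟨_, Y₀, hY₀, rfl⟩ ?_
      · exact ⟨(eLpNorm X p P * C).toReal, by
          rintro v ⟨π, hπ, hfst, hsnd, rfl⟩
          exact hmfacts π hπ hfst hsnd⟩
      · rintro v ⟨Y, hY, rfl⟩
        have hpair : AEMeasurable (fun ω => (X ω, Y ω)) P :=
          hX.1.aemeasurable.prodMk (hmeas Y hY)
        refine ⟨P.map (fun ω => (X ω, Y ω)), Measure.isProbabilityMeasure_map hpair, ?_, ?_, ?_⟩
        · rw [AEMeasurable.map_map_of_aemeasurable measurable_fst.aemeasurable hpair]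
          rfl
        · refine ⟨Y, hY, ?_⟩
          rw [AEMeasurable.map_map_of_aemeasurable measurable_snd.aemeasurable hpair]
          rfl
        · rw [integral_map (f := fun z : ℝ × ℝ => z.1 * z.2) hpair (measurable_fst.mul measurable_snd).aestronglyMeasurable]
end

section
/- Let p ∈ [1,∞) with conjugate exponent q, and let R ⊆ P_q([0,∞)) satisfy Assumptions (OT)(i) and (OT)(iii). Then the map χ_R : P_p(ℝ) → ℝ is concave: for all m₁, m₂ ∈ P_p(ℝ) and every θ ∈ [0,1], χ_R((1−θ)m₁ + θm₂) ≥ (1−θ)χ_R(m₁) + θχ_R(m₂). -/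
open MeasureTheory ENNReal

/-- Assumption (OT)(iii): `R` is convex and closed for the weak-* topology induced by
pairing with continuous functions of `q`-growth. -/
def OTthree (q : ℝ≥0∞) (R : Set (Measure ℝ)) : Prop :=
  (∀ r₁ ∈ R, ∀ r₂ ∈ R, ∀ θ : ℝ, 0 ≤ θ → θ ≤ 1 →
    ENNReal.ofReal (1 - θ) • r₁ + ENNReal.ofReal θ • r₂ ∈ R) ∧
  (∀ m : Measure ℝ, IsProbabilityMeasure m → Mmom q m < ⊤ →
    (∀ ε : ℝ, 0 < ε → ∀ G : Finset (ℝ → ℝ),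
      (∀ g ∈ G, Continuous g ∧ ∃ C : ℝ, ∀ y : ℝ, |g y| ≤ C * (1 + |y| ^ q.toReal)) →
      ∃ r ∈ R, ∀ g ∈ G, |(∫ x, g x ∂m) - ∫ x, g x ∂r| < ε) → m ∈ R)

private lemma fst_eLpNorm (p : ℝ≥0∞) (π : Measure (ℝ × ℝ)) :
    eLpNorm (fun z : ℝ × ℝ => z.1) p π = Mmom p (π.map Prod.fst) := by
  rw [Mmom, eLpNorm_map_measure (g := fun x : ℝ => x) aestronglyMeasurable_id
    measurable_fst.aemeasurable]
  rfl

private lemma snd_eLpNorm (p : ℝ≥0∞) (π : Measure (ℝ × ℝ)) :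
    eLpNorm (fun z : ℝ × ℝ => z.2) p π = Mmom p (π.map Prod.snd) := by
  rw [Mmom, eLpNorm_map_measure (g := fun x : ℝ => x) aestronglyMeasurable_id
    measurable_snd.aemeasurable]
  rfl

private lemma holder_plan {p q : ℝ≥0∞} (hpq : p⁻¹ + q⁻¹ = 1) (π : Measure (ℝ × ℝ)) :
    eLpNorm (fun z : ℝ × ℝ => z.1 * z.2) 1 π ≤
      Mmom p (π.map Prod.fst) * Mmom q (π.map Prod.snd) := by
  rw [← fst_eLpNorm p π, ← snd_eLpNorm q π]
  haveI : ENNReal.HolderTriple p q 1 := ⟨by simp [one_div, hpq]⟩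
  refine (eLpNorm_le_eLpNorm_mul_eLpNorm'_of_norm (p := p) (q := q) (r := 1)
    measurable_fst.aestronglyMeasurable measurable_snd.aestronglyMeasurable (· * ·) 1
    (Filter.Eventually.of_forall fun z => ?_)).trans (by simp)
  · simp [Real.norm_eq_abs, abs_mul]

/-- Integrability of the cost and the basic bound on the value of any admissible plan. -/
private lemma plan_value_bound {p q : ℝ≥0∞} (hpq : p⁻¹ + q⁻¹ = 1)
    {L : ℝ≥0∞} (hLtop : L ≠ ⊤)
    {m : Measure ℝ} (hmp : Mmom p m < ⊤)
    {π : Measure (ℝ × ℝ)}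
    (h1 : π.map Prod.fst = m) (h2 : Mmom q (π.map Prod.snd) ≤ L) :
    Integrable (fun z : ℝ × ℝ => z.1 * z.2) π ∧
      |∫ z : ℝ × ℝ, z.1 * z.2 ∂π| ≤ (Mmom p m * L).toReal := by
  have hH : eLpNorm (fun z : ℝ × ℝ => z.1 * z.2) 1 π ≤ Mmom p m * L := by
    refine (holder_plan hpq π).trans ?_
    rw [h1]
    exact mul_le_mul_right h2 _
  have hfin : Mmom p m * L ≠ ⊤ := ENNReal.mul_ne_top hmp.ne hLtop
  have hint : Integrable (fun z : ℝ × ℝ => z.1 * z.2) π := by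
    refine ⟨(continuous_fst.mul continuous_snd).aestronglyMeasurable, ?_⟩
    rw [HasFiniteIntegral, ← eLpNorm_one_eq_lintegral_enorm]
    exact lt_of_le_of_lt hH (lt_top_iff_ne_top.2 hfin)
  refine ⟨hint, ?_⟩
  rw [← Real.norm_eq_abs]
  refine (norm_integral_le_lintegral_norm _).trans ?_
  refine ENNReal.toReal_mono hfin ?_
  refine le_trans (le_of_eq ?_) hH
  rw [eLpNorm_one_eq_lintegral_enorm]
  simp_rw [ofReal_norm_eq_enorm]

private lemma Mmom_mix_lt_top {p : ℝ≥0∞} (hp0 : p ≠ 0) (hptop : p ≠ ⊤)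
    {μ ν : Measure ℝ} (hμ : Mmom p μ < ⊤) (hν : Mmom p ν < ⊤)
    {a b : ℝ≥0∞} (ha : a ≠ ⊤) (hb : b ≠ ⊤) : Mmom p (a • μ + b • ν) < ⊤ := by
  have hptr : (0:ℝ) < p.toReal := ENNReal.toReal_pos hp0 hptop
  rw [Mmom, eLpNorm_eq_lintegral_rpow_enorm_toReal hp0 hptop] at hμ hν ⊢
  rw [lintegral_add_measure, lintegral_smul_measure, lintegral_smul_measure]
  have h1 : (0:ℝ) < 1 / p.toReal := by positivity
  refine (ENNReal.rpow_lt_top_iff_of_pos h1).2 ?_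
  exact ENNReal.add_lt_top.2
    ⟨ENNReal.mul_lt_top ha.lt_top ((ENNReal.rpow_lt_top_iff_of_pos h1).1 hμ),
     ENNReal.mul_lt_top hb.lt_top ((ENNReal.rpow_lt_top_iff_of_pos h1).1 hν)⟩

private lemma aux_sup {a : ℝ} (ha : 0 ≤ a) {S : Set ℝ} (hS : S.Nonempty)
    {C : ℝ} (h : ∀ v ∈ S, a * v ≤ C) : a * sSup S ≤ C := by
  rcases eq_or_lt_of_le ha with h0 | h0
  · obtain ⟨v, hv⟩ := hS
    simpa [← h0] using h v hv
  · rw [mul_comm, ← le_div_iff₀ h0]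
    exact csSup_le hS fun v hv => (le_div_iff₀ h0).2 (by rw [mul_comm]; exact h v hv)

/-- Concavity of `χ_R` on `P_p(ℝ)` when `R ⊆ P_q([0,∞))` satisfies (OT)(i) and (OT)(iii). -/
theorem chi_concave
    (p q : ℝ≥0∞) (hp1 : 1 ≤ p) (hptop : p ≠ ⊤) (hpq : p⁻¹ + q⁻¹ = 1)
    (R : Set (Measure ℝ)) (hR1 : OTone q R)
    (hRpos : ∀ r ∈ R, r (Set.Iio (0:ℝ)) = 0)
    (hR3 : OTthree q R)
    (m₁ m₂ : Measure ℝ)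
    (hm₁ : IsProbabilityMeasure m₁) (hm₁p : Mmom p m₁ < ⊤)
    (hm₂ : IsProbabilityMeasure m₂) (hm₂p : Mmom p m₂ < ⊤)
    (θ : ℝ) (hθ0 : 0 ≤ θ) (hθ1 : θ ≤ 1) :
    (1 - θ) * chi R m₁ + θ * chi R m₂ ≤
      chi R (ENNReal.ofReal (1 - θ) • m₁ + ENNReal.ofReal θ • m₂) := by
  obtain ⟨hRprob, hRL⟩ := hR1
  set L : ℝ≥0∞ := ⨆ r ∈ R, Mmom q r with hLdef
  have hLtop : L ≠ ⊤ := hRL.ne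
  have hLbd : ∀ r ∈ R, Mmom q r ≤ L := fun r hr => le_biSup _ hr
  set S : Measure ℝ → Set ℝ := fun m =>
    {v : ℝ | ∃ π : Measure (ℝ × ℝ), IsProbabilityMeasure π ∧
      π.map Prod.fst = m ∧ π.map Prod.snd ∈ R ∧ v = ∫ z : ℝ × ℝ, z.1 * z.2 ∂π}
      with hSdef
  have hchi : ∀ m, chi R m = sSup (S m) := fun m => rfl
  rcases R.eq_empty_or_nonempty with hRe | ⟨r₀, hr₀⟩
  · have hSe : ∀ m : Measure ℝ, S m = ∅ := by
      intro m
      ext v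
      simp only [hSdef, Set.mem_setOf_eq, Set.mem_empty_iff_false, iff_false]
      rintro ⟨π, -, -, hπR, -⟩
      exact absurd hπR (by simp [hRe])
    simp only [hchi, hSe, Real.sSup_empty, mul_zero, add_zero, le_refl]
  · have hθ1' : (0:ℝ) ≤ 1 - θ := by linarith
    haveI hr₀p : IsProbabilityMeasure r₀ := hRprob r₀ hr₀
    -- nonemptiness of S m for probability m
    have hSne : ∀ m : Measure ℝ, IsProbabilityMeasure m → (S m).Nonempty := by
      intro m hm
      haveI := hm
      refine ⟨∫ z : ℝ × ℝ, z.1 * z.2 ∂(m.prod r₀), m.prod r₀, inferInstance, ?_, ?_, rfl⟩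
      · rw [Measure.map_fst_prod]; simp
      · rw [Measure.map_snd_prod]; simpa using hr₀
    -- boundedness
    have hSbd : ∀ m : Measure ℝ, Mmom p m < ⊤ → BddAbove (S m) := by
      intro m hmp
      refine ⟨(Mmom p m * L).toReal, ?_⟩
      rintro v ⟨π, hπ, hfst, hsnd, rfl⟩
      exact le_of_abs_le (plan_value_bound hpq hLtop hmp hfst (hLbd _ hsnd)).2
    -- the mixed measure
    set m₀ : Measure ℝ := ENNReal.ofReal (1 - θ) • m₁ + ENNReal.ofReal θ • m₂ with hm₀def
    haveI hm₀ : IsProbabilityMeasure m₀ := by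
      constructor
      rw [hm₀def]
      simp only [Measure.add_toOuterMeasure, Measure.coe_add, Pi.add_apply,
        Measure.smul_apply, smul_eq_mul, measure_univ, mul_one]
      rw [← ENNReal.ofReal_add hθ1' hθ0]
      norm_num
    have hm₀p : Mmom p m₀ < ⊤ :=
      Mmom_mix_lt_top (by positivity) hptop hm₁p hm₂p ofReal_ne_top ofReal_ne_top
    -- membership of convex combinations
    have hmix : ∀ v₁ ∈ S m₁, ∀ v₂ ∈ S m₂, (1 - θ) * v₁ + θ * v₂ ∈ S m₀ := by
      rintro v₁ ⟨π₁, hπ₁, hf₁, hs₁, rfl⟩ v₂ ⟨π₂, hπ₂, hf₂, hs₂, rfl⟩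
      haveI := hπ₁; haveI := hπ₂
      refine ⟨ENNReal.ofReal (1 - θ) • π₁ + ENNReal.ofReal θ • π₂, ?_, ?_, ?_, ?_⟩
      · constructor
        simp only [Measure.coe_add, Pi.add_apply, Measure.smul_apply, smul_eq_mul,
          measure_univ, mul_one]
        rw [← ENNReal.ofReal_add hθ1' hθ0]
        norm_num
      · rw [Measure.map_add _ _ measurable_fst, Measure.map_smul, Measure.map_smul,
          hf₁, hf₂]
      · rw [Measure.map_add _ _ measurable_snd, Measure.map_smul, Measure.map_smul]
        exact hR3.1 _ hs₁ _ hs₂ θ hθ0 hθ1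
      · have hi₁ := (plan_value_bound hpq hLtop hm₁p hf₁ (hLbd _ hs₁)).1
        have hi₂ := (plan_value_bound hpq hLtop hm₂p hf₂ (hLbd _ hs₂)).1
        rw [integral_add_measure (hi₁.smul_measure ofReal_ne_top)
          (hi₂.smul_measure ofReal_ne_top), integral_smul_measure, integral_smul_measure,
          ENNReal.toReal_ofReal hθ1', ENNReal.toReal_ofReal hθ0, smul_eq_mul, smul_eq_mul]
    -- conclusion
    have hS₀bd := hSbd m₀ hm₀p
    have hS₁ne := hSne m₁ hm₁
    have hS₂ne := hSne m₂ hm₂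
    rw [hchi, hchi, hchi]
    have key : ∀ v₁ ∈ S m₁, ∀ v₂ ∈ S m₂, (1 - θ) * v₁ + θ * v₂ ≤ sSup (S m₀) :=
      fun v₁ h₁ v₂ h₂ => le_csSup hS₀bd (hmix v₁ h₁ v₂ h₂)
    have step : ∀ v₁ ∈ S m₁, (1 - θ) * v₁ + θ * sSup (S m₂) ≤ sSup (S m₀) := by
      intro v₁ h₁
      have : θ * sSup (S m₂) ≤ sSup (S m₀) - (1 - θ) * v₁ :=
        aux_sup hθ0 hS₂ne fun v₂ h₂ => by linarith [key v₁ h₁ v₂ h₂]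
      linarith
    have final : (1 - θ) * sSup (S m₁) ≤ sSup (S m₀) - θ * sSup (S m₂) :=
      aux_sup hθ1' hS₁ne fun v₁ h₁ => by linarith [step v₁ h₁]
    linarith
end

section
/- Fix β ∈ [0,1) and let r_β := β·δ₀ + (1−β)·δ_{1/(1−β)}, a Borel probability measure on ℝ. Then for every X ∈ L¹(Ω,ℝ), the Conditional Value at Risk at level β, CV@R_β(X) := inf_{t ∈ ℝ} { t + (1/(1−β))·E[(X−t)₊] }, equals χ_{{r_β}}(ℙ_X), the value of the generalized optimal transport problem with first marginal ℙ_X and second marginal r_β: CV@R_β(X) = sup_{π ∈ Π(ℙ_X, r_β)} ∫_{ℝ²} x·y dπ(x,y). -/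
open MeasureTheory ENNReal

section QuantileAux

open ProbabilityTheory Set Filter Topology

/-- The (left-continuous) quantile function of a measure on `ℝ`, set to `0` outside `(0,1)`. -/
noncomputable def qf (m : Measure ℝ) (u : ℝ) : ℝ :=
  if u ∈ Set.Ioo (0:ℝ) 1 then sInf {y | u ≤ cdf m y} else 0

variable {m : Measure ℝ} [IsProbabilityMeasure m]

lemma qfS_nonempty {u : ℝ} (hu : u < 1) : {y | u ≤ cdf m y}.Nonempty := by
  have h : ∀ᶠ y in atTop, u ≤ cdf m y :=
    (tendsto_cdf_atTop (μ := m)).eventually (eventually_ge_nhds hu)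
  obtain ⟨y, hy⟩ := h.exists
  exact ⟨y, hy⟩

lemma qfS_bddBelow {u : ℝ} (hu : 0 < u) : BddBelow {y | u ≤ cdf m y} := by
  have h : ∀ᶠ y in atBot, cdf m y < u :=
    (tendsto_cdf_atBot (μ := m)).eventually (eventually_lt_nhds hu)
  obtain ⟨x₀, hx₀⟩ := h.exists
  refine ⟨x₀, fun y hy => ?_⟩
  by_contra hlt
  push_neg at hlt
  exact absurd (le_trans hy (monotone_cdf m hlt.le)) (not_le.mpr hx₀)

lemma qf_le_iff {u : ℝ} (hu : u ∈ Set.Ioo (0:ℝ) 1) (x : ℝ) :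
    qf m u ≤ x ↔ u ≤ cdf m x := by
  rw [qf, if_pos hu]
  constructor
  · intro h
    have hev : ∀ y ∈ Ioi x, u ≤ cdf m y := by
      intro y hy
      obtain ⟨s, hs, hsy⟩ := exists_lt_of_csInf_lt (qfS_nonempty hu.2) (lt_of_le_of_lt h hy)
      exact le_trans hs (monotone_cdf m hsy.le)
    have hrc : ContinuousWithinAt (cdf m) (Ioi x) x :=
      ((cdf m).right_continuous x).mono Ioi_subset_Ici_self
    exact ge_of_tendsto hrc (eventually_nhdsWithin_of_forall hev)
  · intro h
    exact csInf_le (qfS_bddBelow hu.1) h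

lemma le_cdf_qf {u : ℝ} (hu : u ∈ Set.Ioo (0:ℝ) 1) : u ≤ cdf m (qf m u) :=
  (qf_le_iff hu _).mp le_rfl

lemma measurable_qf : Measurable (qf m) := by
  apply measurable_of_Iic
  intro x
  have : qf m ⁻¹' Iic x =
      (Ioo (0:ℝ) 1 ∩ Iic (cdf m x)) ∪ ((Ioo (0:ℝ) 1)ᶜ ∩ {u : ℝ | (0:ℝ) ≤ x}) := by
    ext u
    by_cases h : u ∈ Ioo (0:ℝ) 1
    · simp only [mem_preimage, mem_Iic, mem_union, mem_inter_iff, h, mem_compl_iff,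
        not_true_eq_false, false_and, or_false, true_and, qf_le_iff h x]
    · simp only [mem_preimage, mem_Iic, qf, if_neg h, mem_union, mem_inter_iff, h,
        false_and, mem_compl_iff, not_false_eq_true, true_and, false_or, mem_setOf_eq,
        if_false]
  rw [this]
  exact ((measurableSet_Ioo.inter measurableSet_Iic).union
    (measurableSet_Ioo.compl.inter (MeasurableSet.const _)))

lemma map_qf : (volume.restrict (Ioo (0:ℝ) 1)).map (qf m) = m := by
  refine Measure.ext_of_Iic _ _ fun x => ?_
  rw [Measure.map_apply measurable_qf measurableSet_Iic, Measure.restrict_apply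
    (measurable_qf measurableSet_Iic), ← ofReal_cdf (μ := m) x]
  have h0 : 0 ≤ cdf m x := cdf_nonneg m x
  have h1 : cdf m x ≤ 1 := cdf_le_one m x
  have hset : qf m ⁻¹' Iic x ∩ Ioo 0 1 = Ioo (0:ℝ) 1 ∩ Iic (cdf m x) := by
    ext u
    simp only [mem_inter_iff, mem_preimage, mem_Iic]
    constructor
    · rintro ⟨h1, h2⟩; exact ⟨h2, (qf_le_iff h2 x).mp h1⟩
    · rintro ⟨h1, h2⟩; exact ⟨(qf_le_iff h1 x).mpr h2, h1⟩
  rw [hset]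
  rcases lt_or_eq_of_le h1 with h1' | h1'
  · have : Ioo (0:ℝ) 1 ∩ Iic (cdf m x) = Ioc 0 (cdf m x) := by
      ext u
      simp only [mem_inter_iff, mem_Ioo, mem_Iic, mem_Ioc]
      constructor
      · rintro ⟨⟨a, b⟩, c⟩; exact ⟨a, c⟩
      · rintro ⟨a, b⟩; exact ⟨⟨a, lt_of_le_of_lt b h1'⟩, b⟩
    rw [this, Real.volume_Ioc, sub_zero]
  · have : Ioo (0:ℝ) 1 ∩ Iic (cdf m x) = Ioo 0 1 := by
      rw [inter_eq_left]
      intro u hu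
      exact le_trans hu.2.le (h1' ▸ le_rfl)
    rw [this, Real.volume_Ioo, sub_zero, ← h1']

lemma map_indicator_aux (β : ℝ) (hβ0 : 0 ≤ β) (hβ1 : β < 1) :
    (volume.restrict (Ioo (0:ℝ) 1)).map (fun u => if β < u then (1-β)⁻¹ else 0) =
      ENNReal.ofReal β • Measure.dirac (0:ℝ) +
        ENNReal.ofReal (1-β) • Measure.dirac ((1-β)⁻¹) := by
  set μ := volume.restrict (Ioo (0:ℝ) 1) with hμ
  set g : ℝ → ℝ := fun u => if β < u then (1-β)⁻¹ else 0 with hg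
  have hgm : Measurable g := Measurable.ite measurableSet_Ioi measurable_const measurable_const
  have hsplit : μ.restrict (Iic β) + μ.restrict (Ioi β) = μ := by
    have := Measure.restrict_add_restrict_compl (μ := μ) (measurableSet_Iic (a := β))
    rwa [compl_Iic] at this
  have h1 : μ.map g = (μ.restrict (Iic β)).map g + (μ.restrict (Ioi β)).map g := by
    rw [← Measure.map_add _ _ hgm, hsplit]
  have h2 : (μ.restrict (Iic β)).map g = ENNReal.ofReal β • Measure.dirac (0:ℝ) := by
    have he : g =ᵐ[μ.restrict (Iic β)] (fun _ => (0:ℝ)) :=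
      ae_restrict_of_forall_mem measurableSet_Iic fun u hu => if_neg (not_lt.mpr hu)
    rw [Measure.map_congr he, Measure.map_const, Measure.restrict_apply_univ, hμ,
      Measure.restrict_apply measurableSet_Iic]
    congr 1
    have : Iic β ∩ Ioo (0:ℝ) 1 = Ioc 0 β := by
      ext u
      simp only [mem_inter_iff, mem_Iic, mem_Ioo, mem_Ioc]
      constructor
      · rintro ⟨a, b, c⟩; exact ⟨b, a⟩
      · rintro ⟨a, b⟩; exact ⟨b, a, lt_of_le_of_lt b hβ1⟩
    rw [this, Real.volume_Ioc, sub_zero]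
  have h3 : (μ.restrict (Ioi β)).map g = ENNReal.ofReal (1-β) • Measure.dirac ((1-β)⁻¹) := by
    have he : g =ᵐ[μ.restrict (Ioi β)] (fun _ => ((1-β)⁻¹:ℝ)) :=
      ae_restrict_of_forall_mem measurableSet_Ioi fun u hu => if_pos hu
    rw [Measure.map_congr he, Measure.map_const, Measure.restrict_apply_univ, hμ,
      Measure.restrict_apply measurableSet_Ioi]
    congr 1
    have : Ioi β ∩ Ioo (0:ℝ) 1 = Ioo β 1 := by
      ext u
      simp only [mem_inter_iff, mem_Ioi, mem_Ioo]
      constructor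
      · rintro ⟨a, b, c⟩; exact ⟨a, c⟩
      · rintro ⟨a, b⟩; exact ⟨a, lt_of_le_of_lt hβ0 a, b⟩
    rw [this, Real.volume_Ioo]
  rw [h1, h2, h3]

lemma integrable_id_dirac (a : ℝ) : Integrable (fun y : ℝ => y) (Measure.dirac a) := by
  refine ⟨measurable_id.aestronglyMeasurable, ?_⟩
  simp [HasFiniteIntegral, lintegral_dirac]

end QuantileAux

/-- Optimal transport representation of the Conditional Value at Risk: for `β ∈ [0,1)` and
`r_β = β·δ₀ + (1−β)·δ_{1/(1−β)}`, one has
`CV@R_β(X) = inf_t { t + (1−β)⁻¹ E[(X−t)₊] } = χ_{{r_β}}(ℙ_X)` for every `X ∈ L¹`. -/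
theorem cvar_transport_representation
    (β : ℝ) (hβ0 : 0 ≤ β) (hβ1 : β < 1)
    (Ω : Type) [MeasurableSpace Ω] (P : Measure Ω) [IsProbabilityMeasure P]
    (X : Ω → ℝ) (hX : MemLp X 1 P) :
    (⨅ t : ℝ, (t + (1 - β)⁻¹ * ∫ ω, max (X ω - t) 0 ∂P)) =
      chi {ENNReal.ofReal β • Measure.dirac (0:ℝ) +
            ENNReal.ofReal (1 - β) • Measure.dirac ((1 - β)⁻¹)} (P.map X) := by
  classical
  open Set Filter Topology ProbabilityTheory in
  have h1β : (0:ℝ) < 1 - β := by linarith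
  set c : ℝ := (1 - β)⁻¹ with hc_def
  have hc0 : 0 < c := inv_pos.mpr h1β
  have hcβ : c * (1 - β) = 1 := inv_mul_cancel₀ h1β.ne'
  have hc1 : 1 ≤ c := by nlinarith
  have hXm : AEMeasurable X P := hX.aestronglyMeasurable.aemeasurable
  set m : Measure ℝ := P.map X with hm_def
  haveI : IsProbabilityMeasure m := Measure.isProbabilityMeasure_map hXm
  have hXint : Integrable X P := memLp_one_iff_integrable.mp hX
  have hidm : Integrable (fun x : ℝ => x) m := by
    rw [hm_def]
    exact (integrable_map_measure measurable_id.aestronglyMeasurable hXm).mpr hXint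
  set μ : Measure ℝ := volume.restrict (Ioo (0:ℝ) 1) with hμ_def
  haveI : IsProbabilityMeasure μ := by
    constructor
    rw [hμ_def, Measure.restrict_apply_univ, Real.volume_Ioo]
    simp
  set r : Measure ℝ := ENNReal.ofReal β • Measure.dirac (0:ℝ) +
    ENNReal.ofReal (1 - β) • Measure.dirac c with hr_def
  set S : Set ℝ := {v : ℝ | ∃ π : Measure (ℝ × ℝ), IsProbabilityMeasure π ∧
    π.map Prod.fst = m ∧ π.map Prod.snd ∈ ({r} : Set (Measure ℝ)) ∧
    v = ∫ z : ℝ × ℝ, z.1 * z.2 ∂π} with hS_def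
  have hchi : chi ({r} : Set (Measure ℝ)) m = sSup S := rfl
  -- transfer of expectations from P to m
  have hEt : ∀ t : ℝ, ∫ ω, max (X ω - t) 0 ∂P = ∫ x, max (x - t) 0 ∂m := by
    intro t
    rw [hm_def, integral_map hXm]
    exact ((continuous_id.sub continuous_const).max continuous_const).aestronglyMeasurable
  have hEint : ∀ t : ℝ, Integrable (fun x : ℝ => max (x - t) 0) m := by
    intro t
    have := (hidm.sub (integrable_const t)).pos_part
    simpa using this
  have hEnonneg : ∀ t : ℝ, 0 ≤ ∫ x, max (x - t) 0 ∂m := by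
    intro t
    exact integral_nonneg fun x => le_max_right _ _
  -- integral of y dr = 1
  have hrint : Integrable (fun y : ℝ => y) r := by
    rw [hr_def]
    exact (((integrable_id_dirac 0).smul_measure ofReal_ne_top).add_measure
      ((integrable_id_dirac c).smul_measure ofReal_ne_top))
  have hry : ∫ y, y ∂r = 1 := by
    rw [hr_def, integral_add_measure ((integrable_id_dirac 0).smul_measure ofReal_ne_top)
      ((integrable_id_dirac c).smul_measure ofReal_ne_top), integral_smul_measure,
      integral_smul_measure, integral_dirac, integral_dirac,
      toReal_ofReal hβ0, toReal_ofReal h1β.le]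
    simp only [smul_eq_mul, mul_zero, zero_add]
    rw [mul_comm]
    exact hcβ
  -- weak duality
  have hub : ∀ v ∈ S, ∀ t : ℝ, v ≤ t + c * ∫ x, max (x - t) 0 ∂m := by
    rintro v ⟨π, hπprob, hfst, hsnd, rfl⟩ t
    rw [mem_singleton_iff] at hsnd
    have hπ1 : Integrable (fun z : ℝ × ℝ => z.1) π := by
      have h := integrable_map_measure (μ := π) (f := Prod.fst) (g := fun x : ℝ => x)
        (by rw [hfst]; exact measurable_id.aestronglyMeasurable) measurable_fst.aemeasurable
      rw [hfst] at h
      simpa [Function.comp_def] using h.mp hidm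
    have hπ2 : Integrable (fun z : ℝ × ℝ => z.2) π := by
      have h := integrable_map_measure (μ := π) (f := Prod.snd) (g := fun y : ℝ => y)
        (by rw [hsnd]; exact measurable_id.aestronglyMeasurable) measurable_snd.aemeasurable
      rw [hsnd] at h
      simpa [Function.comp_def] using h.mp hrint
    have hae : ∀ᵐ z : ℝ × ℝ ∂π, z.2 = 0 ∨ z.2 = c := by
      have hs : MeasurableSet ({0, c} : Set ℝ) :=
        (measurableSet_singleton 0).union (measurableSet_singleton c)
      rw [ae_iff]
      have hset : {z : ℝ × ℝ | ¬(z.2 = 0 ∨ z.2 = c)} = Prod.snd ⁻¹' (({0, c} : Set ℝ)ᶜ) := by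
        ext z
        simp [Set.mem_insert_iff]
      rw [hset, ← Measure.map_apply measurable_snd hs.compl, hsnd, hr_def]
      rw [Measure.add_apply, Measure.smul_apply, Measure.smul_apply,
        Measure.dirac_apply' _ hs.compl, Measure.dirac_apply' _ hs.compl]
      simp [Set.indicator_of_notMem, Set.mem_insert_iff]
    have hlhs : Integrable (fun z : ℝ × ℝ => z.1 * z.2) π := by
      refine Integrable.mono' ((hπ1.abs).const_mul c)
        ((measurable_fst.mul measurable_snd).aestronglyMeasurable) ?_
      refine hae.mono fun z hz => ?_
      rcases hz with hz | hz <;> rw [Real.norm_eq_abs, abs_mul, hz]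
      · simp [abs_nonneg, mul_nonneg hc0.le (abs_nonneg _)]
      · rw [abs_of_pos hc0, mul_comm]
    have hmax : Integrable (fun z : ℝ × ℝ => max (z.1 - t) 0) π := by
      have := (hπ1.sub (integrable_const t)).pos_part
      simpa using this
    have hrhs : Integrable (fun z : ℝ × ℝ => t * z.2 + c * max (z.1 - t) 0) π :=
      (hπ2.const_mul t).add (hmax.const_mul c)
    have hbnd : ∀ᵐ z : ℝ × ℝ ∂π, z.1 * z.2 ≤ t * z.2 + c * max (z.1 - t) 0 := by
      refine hae.mono fun z hz => ?_
      rcases hz with hz | hz <;> rw [hz]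
      · simpa using mul_nonneg hc0.le (le_max_right (z.1 - t) 0)
      · have h1 : c * (z.1 - t) ≤ c * max (z.1 - t) 0 :=
          mul_le_mul_of_nonneg_left (le_max_left _ _) hc0.le
        nlinarith [h1]
    calc ∫ z : ℝ × ℝ, z.1 * z.2 ∂π
        ≤ ∫ z : ℝ × ℝ, (t * z.2 + c * max (z.1 - t) 0) ∂π :=
          integral_mono_ae hlhs hrhs hbnd
      _ = t * ∫ z : ℝ × ℝ, z.2 ∂π + c * ∫ z : ℝ × ℝ, max (z.1 - t) 0 ∂π := by
          rw [integral_add (hπ2.const_mul t) (hmax.const_mul c), integral_const_mul,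
            integral_const_mul]
      _ = t + c * ∫ x, max (x - t) 0 ∂m := by
          have e1 : ∫ z : ℝ × ℝ, z.2 ∂π = 1 := by
            have h := integral_map (φ := Prod.snd) (μ := π) measurable_snd.aemeasurable
              (f := fun y : ℝ => y) measurable_id.aestronglyMeasurable
            rw [hsnd] at h
            exact h.symm.trans hry
          have e2 : ∫ z : ℝ × ℝ, max (z.1 - t) 0 ∂π = ∫ x, max (x - t) 0 ∂m := by
            have h := integral_map (φ := Prod.fst) (μ := π) measurable_fst.aemeasurable
              (f := fun x : ℝ => max (x - t) 0)
              (Measurable.aestronglyMeasurable (by fun_prop))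
            rw [hfst] at h
            exact h.symm
          rw [e1, e2, mul_one]
  -- the candidate optimal plan
  have hmapq : μ.map (qf m) = m := by rw [hμ_def]; exact map_qf
  set g : ℝ → ℝ := fun u => if β < u then c else 0 with hg_def
  have hgm : Measurable g := Measurable.ite measurableSet_Ioi measurable_const measurable_const
  set T : ℝ → ℝ × ℝ := fun u => (qf m u, g u) with hT_def
  have hTm : Measurable T := measurable_qf.prodMk hgm
  set π₀ : Measure (ℝ × ℝ) := μ.map T with hπ₀_def
  haveI : IsProbabilityMeasure π₀ := Measure.isProbabilityMeasure_map hTm.aemeasurable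
  have hfst0 : π₀.map Prod.fst = m := by
    rw [hπ₀_def, Measure.map_map measurable_fst hTm]
    exact hmapq
  have hsnd0 : π₀.map Prod.snd = r := by
    rw [hπ₀_def, Measure.map_map measurable_snd hTm, hμ_def, hr_def]
    exact map_indicator_aux β hβ0 hβ1
  have hqint : Integrable (qf m) μ := by
    have h := integrable_map_measure (μ := μ) (f := qf m) (g := fun x : ℝ => x)
      (by rw [hmapq]; exact measurable_id.aestronglyMeasurable) measurable_qf.aemeasurable
    rw [hmapq] at h
    simpa [Function.comp_def] using h.mp hidm
  have hIoi_inter : Ioi β ∩ Ioo (0:ℝ) 1 = Ioo β 1 := by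
    ext u
    simp only [mem_inter_iff, mem_Ioi, mem_Ioo]
    constructor
    · rintro ⟨a, b, e⟩; exact ⟨a, e⟩
    · rintro ⟨a, b⟩; exact ⟨a, lt_of_le_of_lt hβ0 a, b⟩
  set A : ℝ := ∫ u in Ioo β 1, qf m u with hA_def
  have hval : ∫ z : ℝ × ℝ, z.1 * z.2 ∂π₀ = c * A := by
    rw [hπ₀_def, integral_map hTm.aemeasurable
      (Measurable.aestronglyMeasurable (by fun_prop : Measurable fun z : ℝ × ℝ => z.1 * z.2))]
    have hfun : (fun u => (T u).1 * (T u).2) = (Ioi β).indicator (fun u => c * qf m u) := by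
      funext u
      simp only [hT_def, hg_def, Set.indicator, mem_Ioi]
      split_ifs with h
      · ring
      · ring
    rw [hfun, integral_indicator measurableSet_Ioi, hμ_def,
      Measure.restrict_restrict measurableSet_Ioi, hIoi_inter, integral_const_mul]
  have hmem : c * A ∈ S := ⟨π₀, inferInstance, hfst0, mem_singleton_iff.mpr hsnd0, hval.symm⟩
  have hbddS : BddAbove S := ⟨0 + c * ∫ x, max (x - 0) 0 ∂m, fun v hv => hub v hv 0⟩
  have hSne : S.Nonempty := ⟨c * A, hmem⟩
  have hlb : ∀ t : ℝ, (∫ x, x ∂m) ≤ t + c * ∫ ω, max (X ω - t) 0 ∂P := by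
    intro t
    rw [hEt t]
    have h1 : (∫ x, x ∂m) - t ≤ ∫ x, max (x - t) 0 ∂m := by
      have h2 := integral_mono (hidm.sub (integrable_const t)) (hEint t)
        (fun x => le_max_left (x - t) 0)
      simp only [Pi.sub_apply] at h2
      rwa [integral_sub hidm (integrable_const t), integral_const, measureReal_def, measure_univ,
        ENNReal.toReal_one, one_smul] at h2
    nlinarith [hEnonneg t, mul_le_mul_of_nonneg_right hc1 (hEnonneg t)]
  have hbddI : BddBelow (Set.range fun t : ℝ => t + c * ∫ ω, max (X ω - t) 0 ∂P) := by
    refine ⟨∫ x, x ∂m, fun y hy => ?_⟩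
    obtain ⟨t, rfl⟩ := hy
    exact hlb t
  rw [hchi]
  refine le_antisymm (le_trans ?_ (le_csSup hbddS hmem)) ?_
  · -- ⨅ ≤ c * A
    rcases eq_or_lt_of_le hβ0 with hβ | hβ
    · -- β = 0
      have hc1' : c = 1 := by rw [hc_def, ← hβ]; norm_num
      have hEXm : (∫ x, x ∂m) = ∫ ω, X ω ∂P := by
        rw [hm_def]
        exact integral_map hXm measurable_id.aestronglyMeasurable
      have hAvl : c * A = ∫ x, x ∂m := by
        have h := integral_map (φ := qf m) (μ := μ) measurable_qf.aemeasurable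
          (f := fun x : ℝ => x) measurable_id.aestronglyMeasurable
        rw [hmapq] at h
        rw [hc1', one_mul, hA_def, ← hβ, h, hμ_def]
      set G : ℕ → ℝ := fun n => ∫ ω, max (X ω) (-(n:ℝ)) ∂P with hG_def
      have hGint : ∀ n : ℕ, Integrable (fun ω => max (X ω) (-(n:ℝ))) P := by
        intro n
        exact hXint.sup (integrable_const _)
      have hGtend : Filter.Tendsto G Filter.atTop (nhds (∫ x, x ∂m)) := by
        rw [hEXm]
        refine tendsto_integral_of_dominated_convergence (fun ω => |X ω|)
          (fun n => hX.aestronglyMeasurable.sup aestronglyMeasurable_const)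
          hXint.abs (fun n => Filter.Eventually.of_forall fun ω => ?_) ?_
        · show ‖max (X ω) (-(n:ℝ))‖ ≤ |X ω|
          rcases le_total (-(n:ℝ)) (X ω) with h | h
          · rw [max_eq_left h, Real.norm_eq_abs]
          · rw [max_eq_right h, Real.norm_eq_abs,
              abs_of_nonpos (by simp : -(n:ℝ) ≤ 0)]
            have : -X ω ≤ |X ω| := neg_le_abs _
            nlinarith [abs_nonneg (X ω)]
        · refine Filter.Eventually.of_forall fun ω => Filter.EventuallyEq.tendsto ?_
          filter_upwards [Filter.eventually_ge_atTop ⌈-X ω⌉₊] with n hn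
          have : -X ω ≤ (n:ℝ) := le_trans (Nat.le_ceil _) (by exact_mod_cast hn)
          exact max_eq_left (by linarith)
      have hinf_le : ∀ n : ℕ,
          (⨅ t : ℝ, (t + c * ∫ ω, max (X ω - t) 0 ∂P)) ≤ G n := by
        intro n
        refine le_trans (ciInf_le hbddI (-(n:ℝ))) (le_of_eq ?_)
        rw [hc1', one_mul]
        have hms : (fun ω => max (X ω - -(n:ℝ)) 0) =
            fun ω => max (X ω) (-(n:ℝ)) + n := by
          funext ω
          rw [show (0:ℝ) = -(n:ℝ) + n by ring, show X ω - -(n:ℝ) = X ω + n by ring,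
            max_add_add_right]
        rw [hms, integral_add (hGint n) (integrable_const _), integral_const, measureReal_def, measure_univ,
          ENNReal.toReal_one, one_smul, hG_def]
        ring
      rw [hAvl]
      exact ge_of_tendsto hGtend (Filter.Eventually.of_forall hinf_le)
    · -- 0 < β
      have hβmem : β ∈ Ioo (0:ℝ) 1 := ⟨hβ, hβ1⟩
      set t₀ : ℝ := qf m β with ht₀_def
      have hqint' : Integrable (qf m) (volume.restrict (Ioo β 1)) := by
        have hsub : Ioo β 1 ⊆ Ioo (0:ℝ) 1 := fun u hu => ⟨lt_of_le_of_lt hβ0 hu.1, hu.2⟩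
        have hle : volume.restrict (Ioo β 1) ≤ volume.restrict (Ioo (0:ℝ) 1) :=
          Measure.restrict_mono hsub le_rfl
        rw [hμ_def] at hqint
        exact hqint.mono_measure hle
      have hECV : ∫ x, max (x - t₀) 0 ∂m = A - (1 - β) * t₀ := by
        have htrans : ∫ x, max (x - t₀) 0 ∂m = ∫ u, max (qf m u - t₀) 0 ∂μ := by
          have h := integral_map (φ := qf m) (μ := μ) measurable_qf.aemeasurable
            (f := fun x : ℝ => max (x - t₀) 0) (Measurable.aestronglyMeasurable (by fun_prop))
          rw [hmapq] at h
          simpa using h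
        have hptw : ∀ u ∈ Ioo (0:ℝ) 1, max (qf m u - t₀) 0 =
            (Ioi β).indicator (fun u => qf m u - t₀) u := by
          intro u hu
          by_cases h : β < u
          · have ht : t₀ ≤ qf m u :=
              (qf_le_iff hβmem (qf m u)).mpr (le_trans h.le (le_cdf_qf hu))
            rw [Set.indicator_of_mem (show u ∈ Ioi β from h), max_eq_left (by linarith)]
          · have ht : qf m u ≤ t₀ :=
              (qf_le_iff hu t₀).mpr (le_trans (not_lt.mp h) (le_cdf_qf hβmem))
            rw [Set.indicator_of_notMem (show u ∉ Ioi β from h), max_eq_right (by linarith)]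
        have hae2 : (fun u => max (qf m u - t₀) 0) =ᵐ[μ]
            (Ioi β).indicator (fun u => qf m u - t₀) := by
          rw [hμ_def]
          exact ae_restrict_of_forall_mem measurableSet_Ioo hptw
        rw [htrans, integral_congr_ae hae2, integral_indicator measurableSet_Ioi, hμ_def,
          Measure.restrict_restrict measurableSet_Ioi, hIoi_inter,
          integral_sub hqint' (integrable_const t₀), integral_const, measureReal_def,
          Measure.restrict_apply_univ, Real.volume_Ioo,
          ENNReal.toReal_ofReal h1β.le, hA_def, smul_eq_mul]
      have hFt₀ : t₀ + c * ∫ ω, max (X ω - t₀) 0 ∂P = c * A := by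
        rw [hEt t₀, hECV]
        linear_combination (-t₀) * hcβ
      exact hFt₀ ▸ ciInf_le hbddI t₀
  · refine le_ciInf fun t => ?_
    rw [hEt t]
    exact csSup_le hSne fun v hv => hub v hv t
end

section
/- Fix p ∈ (1,∞) with conjugate exponent q = p/(p−1) and a constant c > 1. For (t,u) ∈ ℝ × [0,∞), define g_{t,u}(y) := t·y + u·y^q for y ≥ 0, and its conjugate g_{t,u}*(x) := sup_{y ≥ 0} (x·y − g_{t,u}(y)) ∈ ℝ ∪ {+∞}. Then for every X ∈ L^p(Ω,ℝ), the higher order dual risk measure ρ_{p,c}(X) := inf_{t ∈ ℝ} { t + c·(E[(X−t)₊^p])^{1/p} } satisfies ρ_{p,c}(X) = inf_{(t,u) ∈ ℝ × [0,∞)} { E[g_{t,u}*(X)] + t + u·c^q }, and moreover this infimum is attained: there exists (t̄,ū) ∈ ℝ × [0,∞) achieving it. -/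
open MeasureTheory ENNReal

/-- The conjugate `g_{t,u}*(x) = sup_{y ≥ 0} (x·y − (t·y + u·y^q))`, an element of
`[0,+∞]` (it is nonnegative since `y = 0` is admissible). -/
noncomputable def gstar (q t u : ℝ) (x : ℝ) : ℝ≥0∞ :=
  ⨆ y : {y : ℝ // 0 ≤ y}, ENNReal.ofReal (x * y.1 - (t * y.1 + u * y.1 ^ q))

lemma gstar_zero_le (q t x : ℝ) (h : x ≤ t) : gstar q t 0 x = 0 := by
  rw [gstar, iSup_eq_zero]
  rintro ⟨y, hy⟩
  rw [ENNReal.ofReal_eq_zero]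
  have : (x - t) * y ≤ 0 := mul_nonpos_of_nonpos_of_nonneg (by linarith) hy
  nlinarith

lemma gstar_zero_top (q t x : ℝ) (h : t < x) : gstar q t 0 x = ⊤ := by
  have key : ∀ r : ℝ, ENNReal.ofReal r ≤ gstar q t 0 x := by
    intro r
    have hxt : 0 < x - t := by linarith
    refine le_trans ?_ (le_iSup _ (⟨max 0 (r / (x - t)), le_max_left _ _⟩ :
      {y : ℝ // 0 ≤ y}))
    apply ENNReal.ofReal_le_ofReal
    have h1 : (x - t) * (r / (x - t)) = r := by field_simp
    have h2 : (x - t) * max 0 (r / (x - t)) ≥ r :=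
      calc r = (x-t) * (r/(x-t)) := h1.symm
        _ ≤ (x-t) * max 0 (r / (x-t)) :=
          mul_le_mul_of_nonneg_left (le_max_right _ _) hxt.le
    nlinarith [h2]
  by_contra hne
  have h1 : ENNReal.ofReal ((gstar q t 0 x).toReal + 1) ≤ gstar q t 0 x := key _
  have h2 : gstar q t 0 x < ENNReal.ofReal ((gstar q t 0 x).toReal + 1) := by
    nth_rewrite 1 [← ENNReal.ofReal_toReal hne]
    exact ENNReal.ofReal_lt_ofReal_iff_of_nonneg ENNReal.toReal_nonneg |>.2 (by linarith)
  exact absurd (h1.trans_lt h2) (lt_irrefl _)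

lemma gstar_eq_of_pos {p q : ℝ} (hpq : p.HolderConjugate q) (t u x : ℝ) (hu : 0 < u) :
    gstar q t u x
      = ENNReal.ofReal (max (x - t) 0 ^ p / (p * (q * u) ^ (p - 1))) := by
  have hp0 : 0 < p := hpq.pos
  have hq0 : 0 < q := hpq.symm.pos
  have hqu : 0 < q * u := by positivity
  set a : ℝ := max (x - t) 0 with ha_def
  have ha : 0 ≤ a := le_max_right _ _
  set K : ℝ := (q * u) ^ (p - 1) with hK_def
  have hK : 0 < K := Real.rpow_pos_of_pos hqu _
  apply le_antisymm
  · apply iSup_le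
    rintro ⟨y, hy⟩
    apply ENNReal.ofReal_le_ofReal
    set s : ℝ := (q * u) ^ (1 / q) with hs_def
    have hs : 0 < s := Real.rpow_pos_of_pos hqu _
    have hsp : s ^ p = K := by
      rw [hs_def, hK_def, ← Real.rpow_mul hqu.le,
        show (1/q) * p = p - 1 by rw [one_div_mul_eq_div, hpq.div_conj_eq_sub_one]]
    have hsq : s ^ q = q * u := by
      rw [hs_def, ← Real.rpow_mul hqu.le, one_div_mul_cancel hq0.ne', Real.rpow_one]
    have young : (a / s) * (s * y) ≤ (a / s) ^ p / p + (s * y) ^ q / q :=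
      Real.young_inequality_of_nonneg (by positivity) (by positivity) hpq
    have e1 : (a / s) * (s * y) = a * y := by field_simp
    have e2 : (a / s) ^ p = a ^ p / K := by rw [Real.div_rpow ha hs.le, hsp]
    have e3 : (s * y) ^ q = (q * u) * y ^ q := by rw [Real.mul_rpow hs.le hy, hsq]
    have e4 : (q * u) * y ^ q / q = u * y ^ q := by field_simp
    have h5 : (x - t) * y ≤ a * y := mul_le_mul_of_nonneg_right (le_max_left _ _) hy
    have e5 : a ^ p / K / p = a ^ p / (p * K) := by rw [div_div, mul_comm]
    rw [e1, e2, e3, e4, e5] at young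
    nlinarith [young]
  · refine le_iSup_of_le ⟨(a / (q * u)) ^ (p - 1), by positivity⟩ ?_
    apply ENNReal.ofReal_le_ofReal
    show a ^ p / (p * K) ≤ x * ((a / (q * u)) ^ (p - 1)) -
      (t * ((a / (q * u)) ^ (p - 1)) + u * ((a / (q * u)) ^ (p - 1)) ^ q)
    rcases eq_or_lt_of_le ha with ha0 | ha0
    · have hy0 : ((a / (q * u)) ^ (p - 1) : ℝ) = 0 := by
        rw [← ha0, zero_div, Real.zero_rpow (by intro h; exact hpq.sub_one_ne_zero h)]
      rw [hy0]
      have ha0' : a = 0 := ha0.symm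
      rw [ha0', Real.zero_rpow hp0.ne']
      rw [Real.zero_rpow hq0.ne']
      simp
    · have hxt : x - t = a := (max_eq_left (le_of_lt (by
        -- a > 0 means x - t > 0
        by_contra hcon
        push_neg at hcon
        have : a = 0 := by rw [ha_def]; exact max_eq_right hcon
        linarith))).symm
      set y : ℝ := (a / (q * u)) ^ (p - 1) with hy_def
      have hy : 0 < y := Real.rpow_pos_of_pos (by positivity) _
      have e1 : a * y = a ^ p / K := by
        rw [hy_def, Real.div_rpow ha0.le hqu.le, hK_def]
        rw [show a * (a ^ (p-1) / (q*u) ^ (p-1)) = (a * a ^ (p-1)) / (q*u)^(p-1) by ring]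
        congr 1
        rw [← Real.rpow_one_add' ha (by intro h; exact hp0.ne' (by linarith))]
        ring_nf
      have e2 : u * y ^ q = a ^ p / (q * K) := by
        rw [hy_def, ← Real.rpow_mul (by positivity), hpq.sub_one_mul_conj,
          Real.div_rpow ha0.le hqu.le,
          show (q*u) ^ p = (q*u) ^ (p - 1 + 1) by ring_nf,
          Real.rpow_add hqu, Real.rpow_one, hK_def]
        field_simp
      have key : a ^ p / (p * K) = a * y - u * y ^ q := by
        rw [e1, e2]
        have hmul : p * q = p + q := hpq.mul_eq_add
        field_simp
        linear_combination (-1 : ℝ) * hmul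
      rw [key]
      have : x * y - t * y = a * y := by rw [← hxt]; ring
      linarith


set_option maxHeartbeats 2000000 in
/-- Duality formula for higher moment risk measures and attainment of the dual problem:
`ρ_{p,c}(X) = inf_{(t,u) ∈ ℝ × [0,∞)} { E[g_{t,u}*(X)] + t + u·c^q }`, and the infimum
is attained at some `(t̄,ū)`. -/
theorem higher_moment_duality_attained
    (p : ℝ) (hp : 1 < p) (c : ℝ) (hc : 1 < c) (q : ℝ) (hq : q = p / (p - 1))
    (Ω : Type) [MeasurableSpace Ω] (P : Measure Ω) [IsProbabilityMeasure P]
    (X : Ω → ℝ) (hX : MemLp X (ENNReal.ofReal p) P) :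
    (((⨅ t : ℝ, (t + c * (∫ ω, max (X ω - t) 0 ^ p ∂P) ^ (1 / p)) : ℝ)) : EReal) =
      (⨅ tu : ℝ × {u : ℝ // 0 ≤ u},
        (((∫⁻ ω, gstar q tu.1 tu.2.1 (X ω) ∂P : ℝ≥0∞) : EReal) +
          ((tu.1 + tu.2.1 * c ^ q : ℝ) : EReal))) ∧
    ∃ t u : ℝ, 0 ≤ u ∧
      (((⨅ t' : ℝ, (t' + c * (∫ ω, max (X ω - t') 0 ^ p ∂P) ^ (1 / p)) : ℝ)) : EReal) =
        ((∫⁻ ω, gstar q t u (X ω) ∂P : ℝ≥0∞) : EReal) + ((t + u * c ^ q : ℝ) : EReal) := by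
  have hp0 : 0 < p := lt_trans one_pos hp
  have hpq : p.HolderConjugate q := (Real.holderConjugate_iff_eq_conjExponent hp).2 hq
  have hq0 : 0 < q := hpq.symm.pos
  have hc0 : 0 < c := lt_trans one_pos hc
  set A : ℝ → ℝ := fun t => ∫ ω, max (X ω - t) 0 ^ p ∂P with hA_def
  set φ : ℝ → ℝ := fun t => t + c * A t ^ (1/p) with hφ_def
  -- basic integrability facts
  have hofp_ne : (ENNReal.ofReal p) ≠ 0 := by
    simp only [ne_eq, ENNReal.ofReal_eq_zero, not_le]; exact hp0
  have hmem : ∀ t : ℝ, MemLp (fun ω => max (X ω - t) 0) (ENNReal.ofReal p) P := by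
    intro t
    have h1 : MemLp (fun ω => X ω - t) (ENNReal.ofReal p) P := hX.sub (memLp_const t)
    exact h1.pos_part
  have hintgr : ∀ t : ℝ, Integrable (fun ω => max (X ω - t) 0 ^ p) P := by
    intro t
    have h2 := (hmem t).integrable_norm_rpow hofp_ne ENNReal.ofReal_ne_top
    rw [ENNReal.toReal_ofReal hp0.le] at h2
    refine h2.congr (Filter.Eventually.of_forall fun ω => ?_)
    beta_reduce
    rw [Real.norm_of_nonneg (le_max_right _ _)]
  have hA_nonneg : ∀ t, 0 ≤ A t := fun t =>
    integral_nonneg fun ω => Real.rpow_nonneg (le_max_right _ _) p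
  -- continuity of A
  have hcontA : Continuous A := by
    rw [continuous_iff_continuousAt]
    intro t0
    have hbnd : Integrable (fun ω => (‖X ω‖ + (|t0| + 1)) ^ p) P := by
      have h1 : MemLp (fun ω => ‖X ω‖ + (|t0| + 1)) (ENNReal.ofReal p) P :=
        hX.norm.add (memLp_const _)
      have h2 := h1.integrable_norm_rpow hofp_ne ENNReal.ofReal_ne_top
      rw [ENNReal.toReal_ofReal hp0.le] at h2
      refine h2.congr (Filter.Eventually.of_forall fun ω => ?_)
      beta_reduce
      rw [Real.norm_of_nonneg (by positivity)]
    refine continuousAt_of_dominated ?_ ?_ hbnd ?_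
    · exact Filter.Eventually.of_forall fun t => (hintgr t).1
    · filter_upwards [eventually_abs_sub_lt t0 one_pos] with t ht
      refine Filter.Eventually.of_forall fun ω => ?_
      rw [Real.norm_of_nonneg (Real.rpow_nonneg (le_max_right _ _) p)]
      apply Real.rpow_le_rpow (le_max_right _ _) _ hp0.le
      have h3 : |t| ≤ |t0| + 1 := by
        have := abs_sub_abs_le_abs_sub t t0
        linarith
      apply max_le
      · have := le_abs_self (X ω)
        have := neg_abs_le t
        have : -t ≤ |t| := neg_le_abs t
        rw [Real.norm_eq_abs]
        linarith [le_abs_self (X ω)]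
      · positivity
    · refine Filter.Eventually.of_forall fun ω => ?_
      have h1 : ContinuousAt (fun t : ℝ => max (X ω - t) 0) t0 :=
        ((continuous_const.sub continuous_id).max continuous_const).continuousAt
      exact (Real.continuousAt_rpow_const _ p (Or.inr hp0.le)).comp h1
  have hcontφ : Continuous φ :=
    continuous_id.add (continuous_const.mul
      (hcontA.rpow_const fun t => Or.inr (by positivity)))
  -- coercivity setup
  obtain ⟨X', hX'sm, hXX'⟩ := hX.1
  have hm : Measurable X' := hX'sm.measurable
  have hcp : (0:ℝ) < c ^ (-p) := Real.rpow_pos_of_pos hc0 _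
  have hcp1 : c ^ (-p) < 1 :=
    Real.rpow_lt_one_of_one_lt_of_neg hc (neg_lt_zero.2 hp0)
  obtain ⟨n₀, hn₀⟩ : ∃ n : ℕ, ENNReal.ofReal (c ^ (-p)) < P {ω | -(n:ℝ) < X' ω} := by
    by_contra hcon
    push_neg at hcon
    have hUnion : (⋃ n : ℕ, {ω | -(n:ℝ) < X' ω}) = Set.univ := by
      ext ω
      simp only [Set.mem_iUnion, Set.mem_setOf_eq, Set.mem_univ, iff_true]
      obtain ⟨n, hn⟩ := exists_nat_gt (-(X' ω))
      exact ⟨n, by linarith⟩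
    have hmono : Monotone (fun n : ℕ => {ω | -(n:ℝ) < X' ω}) := by
      intro i j hij ω hω
      simp only [Set.mem_setOf_eq] at *
      have : (i:ℝ) ≤ (j:ℝ) := Nat.cast_le.2 hij
      linarith
    have hdir := hmono.directed_le
    have hsup := Directed.measure_iUnion (μ := P) hdir
    rw [hUnion, measure_univ] at hsup
    have h1 : (1 : ℝ≥0∞) ≤ ENNReal.ofReal (c ^ (-p)) := hsup.le.trans (iSup_le hcon)
    have h2 : ENNReal.ofReal (c ^ (-p)) < 1 := by
      rw [← ENNReal.ofReal_one]
      exact (ENNReal.ofReal_lt_ofReal_iff one_pos).2 hcp1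
    exact absurd (h1.trans_lt h2) (lt_irrefl _)
  set m : ℝ := -(n₀ : ℝ) with hm_def
  set S : Set Ω := {ω | m < X' ω} with hS_def
  have hS : MeasurableSet S := measurableSet_lt measurable_const hm
  set δ : ℝ := (P S).toReal with hδ_def
  have hδ : c ^ (-p) < δ := by
    have h1 := (ENNReal.toReal_lt_toReal ENNReal.ofReal_ne_top (measure_ne_top P S)).2 hn₀
    rwa [ENNReal.toReal_ofReal hcp.le] at h1
  have hδ0 : 0 < δ := lt_trans hcp hδ
  -- lower bound on A below m
  have hAlow : ∀ t, t ≤ m → (m - t) ^ p * δ ≤ A t := by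
    intro t ht
    have hae : ∀ᵐ ω ∂P, ω ∈ S → (m - t) ^ p ≤ max (X ω - t) 0 ^ p := by
      filter_upwards [hXX'] with ω hω hmemS
      have h1 : m - t ≤ X ω - t := by
        rw [hS_def] at hmemS
        simp only [Set.mem_setOf_eq] at hmemS
        rw [hω]; linarith
      have h2 : m - t ≤ max (X ω - t) 0 := le_trans h1 (le_max_left _ _)
      exact Real.rpow_le_rpow (by linarith) h2 hp0.le
    calc (m - t) ^ p * δ = ∫ _ω in S, (m - t) ^ p ∂P := by
          rw [setIntegral_const, smul_eq_mul, mul_comm]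
          rfl
      _ ≤ ∫ ω in S, max (X ω - t) 0 ^ p ∂P :=
          setIntegral_mono_on_ae
            (integrableOn_const (measure_lt_top P S).ne)
            ((hintgr t).integrableOn) hS hae
      _ ≤ A t := setIntegral_le_integral (hintgr t)
            (Filter.Eventually.of_forall fun ω => Real.rpow_nonneg (le_max_right _ _) p)
  have hAtop : ∀ t : ℝ, t ≤ φ t := by
    intro t
    have h1 : 0 ≤ c * A t ^ (1/p) :=
      mul_nonneg hc0.le (Real.rpow_nonneg (hA_nonneg t) _)
    simp only [hφ_def]; linarith
  set κ : ℝ := c * δ ^ (1/p) - 1 with hκ_def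
  have hκ0 : 0 < κ := by
    have h1 : c⁻¹ < δ ^ (1/p) := by
      have h2 := Real.rpow_lt_rpow hcp.le hδ (by positivity : (0:ℝ) < 1/p)
      rwa [← Real.rpow_mul hc0.le,
        show -p * (1/p) = -1 by field_simp, Real.rpow_neg_one] at h2
    have h3 := mul_lt_mul_of_pos_left h1 hc0
    rw [mul_inv_cancel₀ hc0.ne'] at h3
    rw [hκ_def]; linarith
  have hφlow : ∀ t, t ≤ m → m + κ * (m - t) ≤ φ t := by
    intro t ht
    have h1 : (m - t) * δ ^ (1/p) ≤ A t ^ (1/p) := by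
      have h2 := Real.rpow_le_rpow (mul_nonneg (Real.rpow_nonneg (by linarith) p) hδ0.le) (hAlow t ht) (by positivity : (0:ℝ) ≤ 1/p)
      rwa [Real.mul_rpow (Real.rpow_nonneg (by linarith) p) hδ0.le,
        ← Real.rpow_mul (by linarith : (0:ℝ) ≤ m - t),
        mul_one_div_cancel hp0.ne', Real.rpow_one] at h2
    have h3 : c * ((m - t) * δ ^ (1/p)) ≤ c * A t ^ (1/p) :=
      mul_le_mul_of_nonneg_left h1 hc0.le
    have h4 : c * ((m - t) * δ ^ (1/p)) = (m - t) * (κ + 1) := by rw [hκ_def]; ring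
    simp only [hφ_def]
    nlinarith [h3, h4]
  -- minimizer of φ
  set hi : ℝ := max 0 (φ 0) with hhi_def
  set lo : ℝ := min 0 (min m (m - (φ 0 - m) / κ)) with hlo_def
  have hlo0 : lo ≤ 0 := min_le_left _ _
  have hhi0 : (0:ℝ) ≤ hi := le_max_left _ _
  obtain ⟨tbar, htmem, htmin⟩ :=
    (isCompact_Icc : IsCompact (Set.Icc lo hi)).exists_isMinOn
      ⟨0, Set.mem_Icc.2 ⟨hlo0, hhi0⟩⟩ hcontφ.continuousOn
  have hmin : ∀ t, φ tbar ≤ φ t := by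
    intro t
    by_cases hmem' : t ∈ Set.Icc lo hi
    · exact isMinOn_iff.1 htmin t hmem'
    · have h0 : φ tbar ≤ φ 0 := isMinOn_iff.1 htmin 0 (Set.mem_Icc.2 ⟨hlo0, hhi0⟩)
      rw [Set.mem_Icc, not_and_or] at hmem'
      push_neg at hmem'
      rcases hmem' with hlt | hgt
      · have ht_m : t ≤ m := by
          have h1 : lo ≤ m := le_trans (min_le_right _ _) (min_le_left _ _)
          linarith
        have h1 := hφlow t ht_m
        have h3 : lo ≤ m - (φ 0 - m) / κ := le_trans (min_le_right _ _) (min_le_right _ _)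
        have h4 : φ 0 - m ≤ κ * (m - t) := by
          have h5 : (φ 0 - m) / κ ≤ m - t := by linarith
          rw [div_le_iff₀ hκ0] at h5
          nlinarith
        linarith
      · have h1 := hAtop t
        have h2 : φ 0 ≤ hi := le_max_right _ _
        linarith
  have hbdd : BddBelow (Set.range φ) := ⟨φ tbar, by rintro y ⟨t, rfl⟩; exact hmin t⟩
  have hρ : (⨅ t, φ t) = φ tbar := le_antisymm (ciInf_le hbdd tbar) (le_ciInf hmin)
  -- lintegral computations
  have hlint_pos : ∀ t u : ℝ, 0 < u → ∫⁻ ω, gstar q t u (X ω) ∂P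
      = ENNReal.ofReal (A t / (p * (q * u) ^ (p - 1))) := by
    intro t u hu
    rw [lintegral_congr fun ω => gstar_eq_of_pos hpq t u (X ω) hu]
    rw [← ofReal_integral_eq_lintegral_ofReal ((hintgr t).div_const _)
      (Filter.Eventually.of_forall fun ω => by positivity)]
    congr 1
    exact integral_div _ _
  have hlint_zero : ∀ t : ℝ, (∀ᵐ ω ∂P, X ω ≤ t) → ∫⁻ ω, gstar q t 0 (X ω) ∂P = 0 := by
    intro t ht
    have h1 : (fun ω => gstar q t 0 (X ω)) =ᵐ[P] (fun _ => 0) := by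
      filter_upwards [ht] with ω hω
      exact gstar_zero_le q t (X ω) hω
    rw [lintegral_congr_ae h1, lintegral_zero]
  have hlint_zero_top : ∀ t : ℝ, ¬ (∀ᵐ ω ∂P, X ω ≤ t) →
      ∫⁻ ω, gstar q t 0 (X ω) ∂P = ⊤ := by
    intro t ht
    have hne' : ¬ (∀ᵐ ω ∂P, X' ω ≤ t) := by
      intro hcon
      exact ht (by filter_upwards [hcon, hXX'] with ω h1 h2; rw [h2]; exact h1)
    set s : Set Ω := {ω | t < X' ω} with hs_def
    have hs : MeasurableSet s := measurableSet_lt measurable_const hm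
    have hμs : P s ≠ 0 := by
      intro hcon
      apply hne'
      rw [ae_iff]
      convert hcon using 2
      ext ω
      simp [hs_def]
    have h1 : (fun ω => gstar q t 0 (X ω)) =ᵐ[P] (fun ω => gstar q t 0 (X' ω)) := by
      filter_upwards [hXX'] with ω hω; rw [hω]
    rw [lintegral_congr_ae h1]
    refine top_le_iff.1 ?_
    calc (⊤ : ℝ≥0∞) = ⊤ * P s := (ENNReal.top_mul hμs).symm
      _ = ∫⁻ _ω in s, ⊤ ∂P := (setLIntegral_const s ⊤).symm
      _ = ∫⁻ ω in s, gstar q t 0 (X' ω) ∂P := by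
          refine (setLIntegral_congr_fun hs (fun ω hω => ?_)).symm
          exact gstar_zero_top q t (X' ω) hω
      _ ≤ ∫⁻ ω, gstar q t 0 (X' ω) ∂P := setLIntegral_le_lintegral s _
  -- Young's inequality in u
  have hsp_gen : ∀ u : ℝ, 0 < u → ((q*u) ^ (1/q)) ^ p = (q*u) ^ (p-1) := by
    intro u hu
    have hqu : 0 < q * u := by positivity
    rw [← Real.rpow_mul hqu.le,
      show (1/q) * p = p - 1 by rw [one_div_mul_eq_div, hpq.div_conj_eq_sub_one]]
  have hsq_gen : ∀ u : ℝ, 0 < u → ((q*u) ^ (1/q)) ^ q = q * u := by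
    intro u hu
    have hqu : 0 < q * u := by positivity
    rw [← Real.rpow_mul hqu.le, one_div_mul_cancel hq0.ne', Real.rpow_one]
  have hYoung : ∀ t u : ℝ, 0 < u →
      c * A t ^ (1/p) ≤ A t / (p * (q*u) ^ (p-1)) + u * c ^ q := by
    intro t u hu
    have hqu : 0 < q * u := by positivity
    set s : ℝ := (q*u) ^ (1/q) with hs_def
    have hs : 0 < s := Real.rpow_pos_of_pos hqu _
    have hK : 0 < (q*u) ^ (p-1) := Real.rpow_pos_of_pos hqu _
    have hYI := Real.young_inequality_of_nonneg
      (a := A t ^ (1/p) / s) (b := c * s)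
      (by positivity) (by positivity) hpq
    have e1 : A t ^ (1/p) / s * (c * s) = c * A t ^ (1/p) := by field_simp
    have e2 : (A t ^ (1/p) / s) ^ p = A t / (q*u) ^ (p-1) := by
      rw [Real.div_rpow (Real.rpow_nonneg (hA_nonneg t) _) hs.le, hs_def, hsp_gen u hu,
        ← Real.rpow_mul (hA_nonneg t), one_div_mul_cancel hp0.ne', Real.rpow_one]
    have e3 : (c * s) ^ q = c ^ q * (q * u) := by
      rw [Real.mul_rpow hc0.le hs.le, hs_def, hsq_gen u hu]
    rw [e1, e2, e3] at hYI
    have e4 : A t / (q*u) ^ (p-1) / p = A t / (p * (q*u) ^ (p-1)) := by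
      rw [div_div, mul_comm]
    have e5 : c ^ q * (q*u) / q = u * c ^ q := by field_simp
    rw [e4, e5] at hYI
    exact hYI
  -- optimal u identity
  have hOpt : ∀ t : ℝ, 0 < A t →
      A t / (p * (q * (A t ^ (1/p) / (q * c ^ (q/p)))) ^ (p-1))
        + (A t ^ (1/p) / (q * c ^ (q/p))) * c ^ q = c * A t ^ (1/p) := by
    intro t hA
    set B : ℝ := A t ^ (1/p) with hB_def
    have hB0 : 0 < B := Real.rpow_pos_of_pos hA _
    have hcqp : 0 < c ^ (q/p) := Real.rpow_pos_of_pos hc0 _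
    have h1 : q * (B / (q * c ^ (q/p))) = B / c ^ (q/p) := by field_simp
    have hex1 : q / p * (p - 1) = 1 := by
      have h := hpq.sub_one_mul_conj
      field_simp
      linarith [h]
    have h2 : (B / c ^ (q/p)) ^ (p-1) = B ^ (p-1) / c := by
      rw [Real.div_rpow hB0.le hcqp.le]
      congr 1
      rw [← Real.rpow_mul hc0.le, hex1, Real.rpow_one]
    have h3 : B ^ (p - 1) = A t / B := by
      rw [hB_def, ← Real.rpow_mul (hA_nonneg t), eq_div_iff (Real.rpow_pos_of_pos hA (1/p)).ne',
        ← Real.rpow_add hA, show 1/p * (p-1) + 1/p = 1 by field_simp; ring, Real.rpow_one]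
    have hex2 : q - q / p = 1 := by
      have h := hpq.sub_one_mul_conj
      field_simp
      linarith [h]
    have h4 : c ^ q / c ^ (q/p) = c := by
      rw [← Real.rpow_sub hc0, hex2, Real.rpow_one]
    have hmul : p * q = p + q := hpq.mul_eq_add
    have h5 : c ^ q = c * c ^ (q/p) := (div_eq_iff hcqp.ne').1 h4
    rw [h1, h2, h3, h5]
    field_simp
    linear_combination (-1 : ℝ) * hmul
  -- EReal lower bound at every (t,u)
  have key_lb : ∀ t u : ℝ, 0 ≤ u → ((φ t : ℝ) : EReal) ≤
      ((∫⁻ ω, gstar q t u (X ω) ∂P : ℝ≥0∞) : EReal) + ((t + u * c ^ q : ℝ) : EReal) := by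
    intro t u hu
    rcases eq_or_lt_of_le hu with hu0 | hu0
    · by_cases hae : ∀ᵐ ω ∂P, X ω ≤ t
      · rw [← hu0, hlint_zero t hae]
        have hAt : A t = 0 := by
          have h1 : (fun ω => max (X ω - t) 0 ^ p) =ᵐ[P] (fun _ => (0:ℝ)) := by
            filter_upwards [hae] with ω hω
            rw [max_eq_right (by linarith : X ω - t ≤ 0), Real.zero_rpow hp0.ne']
          show (∫ ω, max (X ω - t) 0 ^ p ∂P) = 0
          rw [integral_congr_ae h1, integral_zero]
        have hφt : φ t = t := by
          simp only [hφ_def, hAt, Real.zero_rpow (by positivity : (1:ℝ)/p ≠ 0), mul_zero,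
            add_zero]
        rw [hφt, EReal.coe_ennreal_zero, zero_add, EReal.coe_le_coe_iff]
        nlinarith [le_refl t]
      · rw [← hu0, hlint_zero_top t hae, EReal.coe_ennreal_top, EReal.top_add_coe]
        exact le_top
    · rw [hlint_pos t u hu0]
      have hC : 0 < p * (q*u) ^ (p-1) := by
        have := Real.rpow_pos_of_pos (show (0:ℝ) < q*u by positivity) (p-1)
        positivity
      have hineq : φ t ≤ A t / (p * (q*u) ^ (p-1)) + (t + u * c ^ q) := by
        have h1 := hYoung t u hu0
        simp only [hφ_def]
        linarith
      calc ((φ t : ℝ) : EReal)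
          ≤ ((A t / (p * (q*u) ^ (p-1)) + (t + u * c ^ q) : ℝ) : EReal) :=
            EReal.coe_le_coe_iff.2 hineq
        _ = _ := by
            rw [EReal.coe_add, EReal.coe_ennreal_ofReal,
              max_eq_left (div_nonneg (hA_nonneg t) hC.le)]
  -- the optimal u at tbar
  have key_opt : ∃ u : ℝ, 0 ≤ u ∧
      ((∫⁻ ω, gstar q tbar u (X ω) ∂P : ℝ≥0∞) : EReal) + ((tbar + u * c ^ q : ℝ) : EReal)
        = ((φ tbar : ℝ) : EReal) := by
    rcases eq_or_lt_of_le (hA_nonneg tbar) with hA0 | hA0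
    · refine ⟨0, le_refl 0, ?_⟩
      have hae : ∀ᵐ ω ∂P, X ω ≤ tbar := by
        have h0 : (fun ω => max (X ω - tbar) 0 ^ p) =ᵐ[P] 0 :=
          (integral_eq_zero_iff_of_nonneg
            (fun ω => Real.rpow_nonneg (le_max_right _ _) p) (hintgr tbar)).1 hA0.symm
        filter_upwards [h0] with ω hω
        simp only [Pi.zero_apply] at hω
        have h1 : max (X ω - tbar) 0 = 0 := by
          by_contra hne
          have h2 : 0 < max (X ω - tbar) 0 :=
            lt_of_le_of_ne (le_max_right _ _) (Ne.symm hne)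
          exact absurd hω (Real.rpow_pos_of_pos h2 p).ne'
        linarith [le_max_left (X ω - tbar) 0, h1.le]
      rw [hlint_zero tbar hae, EReal.coe_ennreal_zero, zero_add]
      have hAt : A tbar = 0 := hA0.symm
      have hφt : φ tbar = tbar := by
        simp only [hφ_def, hAt, Real.zero_rpow (by positivity : (1:ℝ)/p ≠ 0), mul_zero,
          add_zero]
      rw [hφt, EReal.coe_eq_coe_iff]
      ring
    · set u : ℝ := A tbar ^ (1/p) / (q * c ^ (q/p)) with hu_def
      have hcqp : 0 < c ^ (q/p) := Real.rpow_pos_of_pos hc0 _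
      have hB0 : 0 < A tbar ^ (1/p) := Real.rpow_pos_of_pos hA0 _
      have hu0 : 0 < u := by rw [hu_def]; positivity
      refine ⟨u, hu0.le, ?_⟩
      rw [hlint_pos tbar u hu0]
      have hC : 0 < p * (q*u) ^ (p-1) := by
        have := Real.rpow_pos_of_pos (show (0:ℝ) < q*u by positivity) (p-1)
        positivity
      rw [EReal.coe_ennreal_ofReal, max_eq_left (div_nonneg (hA_nonneg tbar) hC.le),
        ← EReal.coe_add, EReal.coe_eq_coe_iff]
      have h1 := hOpt tbar hA0
      simp only [hφ_def]
      rw [hu_def]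
      linarith [h1]
  -- conclude
  obtain ⟨ubar, hubar, hueq⟩ := key_opt
  have hcoe : (((⨅ t : ℝ, φ t : ℝ)) : EReal) = ((φ tbar : ℝ) : EReal) := by rw [hρ]
  constructor
  · apply le_antisymm
    · refine le_iInf fun tu => ?_
      have h1 : (⨅ t, φ t) ≤ φ tu.1 := ciInf_le hbdd tu.1
      exact le_trans (EReal.coe_le_coe_iff.2 h1) (key_lb tu.1 tu.2.1 tu.2.2)
    · refine iInf_le_of_le (tbar, ⟨ubar, hubar⟩) ?_
      exact le_of_eq (hueq.trans hcoe.symm)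
  · exact ⟨tbar, ubar, hubar, hcoe.trans hueq.symm⟩
end
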